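/- arXiv:1302.4181 — 11 statements merged into one kernel-verified Lean document; each statement's English description precedes it below -/
import Mathlib

section
/- Let 𝒩 ⊂ I be a finite set and g : I → ℝ be continuous and nondecreasing, continuously differentiable and twice continuously differentiable on I∖𝒩, with finite one-sided first derivatives g'(x±) at each x ∈ 𝒩, and suppose there is x₀ ∈ I with g(x₀) = 0, g ≤ 0 on (a,x₀] and g > 0 on (x₀,b). Assume: (i) there is a unique x̂ > x₀ such that (Ã_θ g)(x) > 0 for x ∈ (x₀,x̂)∖𝒩 and (Ã_θ g)(x) < 0 for x ∈ (x̂,b)∖𝒩; (ii) g'(x+) ≥ g'(x−) for all x ∈ (x₀,x̂)∩𝒩 and g'(x+) ≤ g'(x−) for all x ∈ (x̂,b)∩𝒩; (iii) lim_{x→b} ψ'(x)/S'(x) = +∞; (iv) sup_{x ∈ (K,b)∖𝒩} (Ã_θ g)(x) < 0 for some K ∈ (x̂,b). Then L_ψg is nonnegative on (a,x₀], nondecreasing on (x₀,x̂), strictly decreasing on (x̂,b)∖𝒩 with lim_{x→b}(L_ψ g)(x) = −∞, and there exists a unique x* ∈ [x̂,b) that maximizes g/ψ over I; moreover g/ψ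 is nondecreasing on (a,x*] and strictly decreasing on [x*,b). -/
open Set Filter

open scoped Topology


/-- Endpoint comparison from nonnegative derivative on the open interval. -/
lemma mono_base {f f₁ : ℝ → ℝ} {p q : ℝ} (hpq : p < q)
    (hc : ContinuousOn f (Icc p q))
    (hd : ∀ z, p < z → z < q → HasDerivAt f (f₁ z) z)
    (h0 : ∀ z, p < z → z < q → 0 ≤ f₁ z) : f p ≤ f q := by
  have hmono := monotoneOn_of_deriv_nonneg (convex_Icc p q) hc
    (fun z hz => by
      rw [interior_Icc] at hz
      exact ((hd z hz.1 hz.2).differentiableAt).differentiableWithinAt)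
    (fun z hz => by
      rw [interior_Icc] at hz
      rw [(hd z hz.1 hz.2).deriv]
      exact h0 z hz.1 hz.2)
  exact hmono (left_mem_Icc.2 hpq.le) (right_mem_Icc.2 hpq.le) hpq.le

/-- Endpoint strict comparison from positive derivative on the open interval. -/
lemma strict_base {f f₁ : ℝ → ℝ} {p q : ℝ} (hpq : p < q)
    (hc : ContinuousOn f (Icc p q))
    (hd : ∀ z, p < z → z < q → HasDerivAt f (f₁ z) z)
    (h0 : ∀ z, p < z → z < q → 0 < f₁ z) : f p < f q := by
  have hmono := strictMonoOn_of_deriv_pos (convex_Icc p q) hc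
    (fun z hz => by
      rw [interior_Icc] at hz
      rw [(hd z hz.1 hz.2).deriv]
      exact h0 z hz.1 hz.2)
  exact hmono (left_mem_Icc.2 hpq.le) (right_mem_Icc.2 hpq.le) hpq

/-- Monotonicity off a finite exceptional set, by induction on the number of
exceptional points in the interval. -/
lemma mono_aux (f f₁ : ℝ → ℝ) (M : Finset ℝ) :
    ∀ (k : ℕ) (p q : ℝ), p < q →
      (M.filter (fun t => p < t ∧ t < q)).card ≤ k →
      ContinuousOn f (Icc p q) →
      (∀ z, p < z → z < q → z ∉ M → HasDerivAt f (f₁ z) z) →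
      (∀ z, p < z → z < q → z ∉ M → 0 ≤ f₁ z) →
      f p ≤ f q := by
  intro k
  induction k with
  | zero =>
    intro p q hpq hcard hc hd h0
    have hemp : (M.filter (fun t => p < t ∧ t < q)) = ∅ :=
      Finset.card_eq_zero.1 (Nat.le_zero.1 hcard)
    have hfree : ∀ z, p < z → z < q → z ∉ M := by
      intro z h1 h2 hz
      have : z ∈ M.filter (fun t => p < t ∧ t < q) := Finset.mem_filter.2 ⟨hz, h1, h2⟩
      simp [hemp] at this
    exact mono_base hpq hc (fun z h1 h2 => hd z h1 h2 (hfree z h1 h2))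
      (fun z h1 h2 => h0 z h1 h2 (hfree z h1 h2))
  | succ k ih =>
    intro p q hpq hcard hc hd h0
    by_cases hne : (M.filter (fun t => p < t ∧ t < q)).Nonempty
    · set n := (M.filter (fun t => p < t ∧ t < q)).min' hne with hn_def
      have hn := Finset.mem_filter.1 ((M.filter (fun t => p < t ∧ t < q)).min'_mem hne)
      have hnM := hn.1; have hpn := hn.2.1; have hnq := hn.2.2
      have hfree : ∀ z, p < z → z < n → z ∉ M := by
        intro z h1 h2 hz
        have hzf : z ∈ M.filter (fun t => p < t ∧ t < q) :=
          Finset.mem_filter.2 ⟨hz, h1, h2.trans hnq⟩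
        exact absurd (Finset.min'_le _ _ hzf) (not_le.2 h2)
      have hleft : f p ≤ f n := by
        refine mono_base (f₁ := f₁) hpn (hc.mono (Icc_subset_Icc le_rfl hnq.le)) ?_ ?_
        · exact fun z h1 h2 => hd z h1 (h2.trans hnq) (hfree z h1 h2)
        · exact fun z h1 h2 => h0 z h1 (h2.trans hnq) (hfree z h1 h2)
      have hsub : M.filter (fun t => n < t ∧ t < q) ⊆
          (M.filter (fun t => p < t ∧ t < q)).erase n := by
        intro t ht
        have ht' := Finset.mem_filter.1 ht
        exact Finset.mem_erase.2 ⟨ne_of_gt ht'.2.1,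
          Finset.mem_filter.2 ⟨ht'.1, hpn.trans ht'.2.1, ht'.2.2⟩⟩
      have hcard' : (M.filter (fun t => n < t ∧ t < q)).card ≤ k := by
        have h1 := Finset.card_le_card hsub
        have h2 : ((M.filter (fun t => p < t ∧ t < q)).erase n).card =
            (M.filter (fun t => p < t ∧ t < q)).card - 1 :=
          Finset.card_erase_of_mem (by rw [hn_def]; exact Finset.min'_mem _ _)
        have h3 : 0 < (M.filter (fun t => p < t ∧ t < q)).card := Finset.card_pos.2 hne
        omega
      have hright : f n ≤ f q := by
        refine ih n q hnq hcard' (hc.mono (Icc_subset_Icc hpn.le le_rfl)) ?_ ?_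
        · exact fun z h1 h2 hz => hd z (hpn.trans h1) h2 hz
        · exact fun z h1 h2 hz => h0 z (hpn.trans h1) h2 hz
      exact hleft.trans hright
    · have hemp := Finset.not_nonempty_iff_eq_empty.1 hne
      have hfree : ∀ z, p < z → z < q → z ∉ M := by
        intro z h1 h2 hz
        have : z ∈ M.filter (fun t => p < t ∧ t < q) := Finset.mem_filter.2 ⟨hz, h1, h2⟩
        simp [hemp] at this
      exact mono_base hpq hc (fun z h1 h2 => hd z h1 h2 (hfree z h1 h2))
        (fun z h1 h2 => h0 z h1 h2 (hfree z h1 h2))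

/-- strict version -/
lemma strict_aux (f f₁ : ℝ → ℝ) (M : Finset ℝ) :
    ∀ (k : ℕ) (p q : ℝ), p < q →
      (M.filter (fun t => p < t ∧ t < q)).card ≤ k →
      ContinuousOn f (Icc p q) →
      (∀ z, p < z → z < q → z ∉ M → HasDerivAt f (f₁ z) z) →
      (∀ z, p < z → z < q → z ∉ M → 0 < f₁ z) →
      f p < f q := by
  intro k
  induction k with
  | zero =>
    intro p q hpq hcard hc hd h0
    have hemp : (M.filter (fun t => p < t ∧ t < q)) = ∅ :=
      Finset.card_eq_zero.1 (Nat.le_zero.1 hcard)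
    have hfree : ∀ z, p < z → z < q → z ∉ M := by
      intro z h1 h2 hz
      have : z ∈ M.filter (fun t => p < t ∧ t < q) := Finset.mem_filter.2 ⟨hz, h1, h2⟩
      simp [hemp] at this
    exact strict_base hpq hc (fun z h1 h2 => hd z h1 h2 (hfree z h1 h2))
      (fun z h1 h2 => h0 z h1 h2 (hfree z h1 h2))
  | succ k ih =>
    intro p q hpq hcard hc hd h0
    by_cases hne : (M.filter (fun t => p < t ∧ t < q)).Nonempty
    · set n := (M.filter (fun t => p < t ∧ t < q)).min' hne with hn_def
      have hn := Finset.mem_filter.1 ((M.filter (fun t => p < t ∧ t < q)).min'_mem hne)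
      have hnM := hn.1; have hpn := hn.2.1; have hnq := hn.2.2
      have hfree : ∀ z, p < z → z < n → z ∉ M := by
        intro z h1 h2 hz
        have hzf : z ∈ M.filter (fun t => p < t ∧ t < q) :=
          Finset.mem_filter.2 ⟨hz, h1, h2.trans hnq⟩
        exact absurd (Finset.min'_le _ _ hzf) (not_le.2 h2)
      have hleft : f p < f n := by
        refine strict_base (f₁ := f₁) hpn (hc.mono (Icc_subset_Icc le_rfl hnq.le)) ?_ ?_
        · exact fun z h1 h2 => hd z h1 (h2.trans hnq) (hfree z h1 h2)
        · exact fun z h1 h2 => h0 z h1 (h2.trans hnq) (hfree z h1 h2)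
      have hsub : M.filter (fun t => n < t ∧ t < q) ⊆
          (M.filter (fun t => p < t ∧ t < q)).erase n := by
        intro t ht
        have ht' := Finset.mem_filter.1 ht
        exact Finset.mem_erase.2 ⟨ne_of_gt ht'.2.1,
          Finset.mem_filter.2 ⟨ht'.1, hpn.trans ht'.2.1, ht'.2.2⟩⟩
      have hcard' : (M.filter (fun t => n < t ∧ t < q)).card ≤ k := by
        have h1 := Finset.card_le_card hsub
        have h2 : ((M.filter (fun t => p < t ∧ t < q)).erase n).card =
            (M.filter (fun t => p < t ∧ t < q)).card - 1 :=
          Finset.card_erase_of_mem (by rw [hn_def]; exact Finset.min'_mem _ _)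
        have h3 : 0 < (M.filter (fun t => p < t ∧ t < q)).card := Finset.card_pos.2 hne
        omega
      have hright : f n < f q := by
        refine ih n q hnq hcard' (hc.mono (Icc_subset_Icc hpn.le le_rfl)) ?_ ?_
        · exact fun z h1 h2 hz => hd z (hpn.trans h1) h2 hz
        · exact fun z h1 h2 hz => h0 z (hpn.trans h1) h2 hz
      exact hleft.trans hright
    · have hemp := Finset.not_nonempty_iff_eq_empty.1 hne
      have hfree : ∀ z, p < z → z < q → z ∉ M := by
        intro z h1 h2 hz
        have : z ∈ M.filter (fun t => p < t ∧ t < q) := Finset.mem_filter.2 ⟨hz, h1, h2⟩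
        simp [hemp] at this
      exact strict_base hpq hc (fun z h1 h2 => hd z h1 h2 (hfree z h1 h2))
        (fun z h1 h2 => h0 z h1 h2 (hfree z h1 h2))

/-- Chain comparison across a finite set of punctures, generic in the relation. -/
lemma chain_aux (L : ℝ → ℝ) (N : Finset ℝ) (u v : ℝ) (r : ℝ → ℝ → Prop)
    (htr : Transitive r)
    (piece : ∀ p q : ℝ, p ∈ Ioo u v → p ∉ N → q ∈ Ioo u v → q ∉ N → p < q →
      (∀ z, p < z → z < q → z ∉ N) → r (L p) (L q))
    (cross : ∀ n : ℝ, n ∈ N → n ∈ Ioo u v → ∀ p q : ℝ, p ∈ Ioo u v → p ∉ N →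
      q ∈ Ioo u v → q ∉ N → p < n → n < q →
      (∀ z, p < z → z < n → z ∉ N) → (∀ z, n < z → z < q → z ∉ N) →
      r (L p) (L q)) :
    ∀ (k : ℕ) (p q : ℝ), p ∈ Ioo u v → p ∉ N → q ∈ Ioo u v → q ∉ N → p < q →
      (N.filter (fun t => p < t ∧ t < q)).card ≤ k → r (L p) (L q) := by
  intro k
  induction k with
  | zero =>
    intro p q hp hpN hq hqN hpq hcard
    have hemp : (N.filter (fun t => p < t ∧ t < q)) = ∅ :=
      Finset.card_eq_zero.1 (Nat.le_zero.1 hcard)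
    refine piece p q hp hpN hq hqN hpq ?_
    intro z h1 h2 hz
    have : z ∈ N.filter (fun t => p < t ∧ t < q) := Finset.mem_filter.2 ⟨hz, h1, h2⟩
    simp [hemp] at this
  | succ k ih =>
    intro p q hp hpN hq hqN hpq hcard
    by_cases hne : (N.filter (fun t => p < t ∧ t < q)).Nonempty
    · set n := (N.filter (fun t => p < t ∧ t < q)).min' hne with hn_def
      have hn := Finset.mem_filter.1 ((N.filter (fun t => p < t ∧ t < q)).min'_mem hne)
      have hnN := hn.1; have hpn := hn.2.1; have hnq := hn.2.2
      have hnuv : n ∈ Ioo u v := ⟨hp.1.trans hpn, hnq.trans hq.2⟩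
      have hfree₁ : ∀ z, p < z → z < n → z ∉ N := by
        intro z h1 h2 hz
        have hzf : z ∈ N.filter (fun t => p < t ∧ t < q) :=
          Finset.mem_filter.2 ⟨hz, h1, h2.trans hnq⟩
        exact absurd (Finset.min'_le _ _ hzf) (not_le.2 h2)
      -- choose s in (n, m') free of punctures
      set Mr := N.filter (fun t => n < t ∧ t < q) with hMr_def
      set m' := if h : Mr.Nonempty then Mr.min' h else q with hm'_def
      have hm'q : m' ≤ q := by
        rw [hm'_def]
        split
        · next h => exact ((Finset.mem_filter.1 (Mr.min'_mem h)).2.2).le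
        · exact le_rfl
      have hnm' : n < m' := by
        rw [hm'_def]
        split
        · next h => exact (Finset.mem_filter.1 (Mr.min'_mem h)).2.1
        · exact hnq
      have hfreeMr : ∀ z, n < z → z < m' → z ∉ N := by
        intro z h1 h2 hz
        have hzq : z < q := lt_of_lt_of_le h2 hm'q
        have hzf : z ∈ Mr := Finset.mem_filter.2 ⟨hz, h1, hzq⟩
        have hMrne : Mr.Nonempty := ⟨z, hzf⟩
        have : m' ≤ z := by
          rw [hm'_def]; simp only [dif_pos hMrne]; exact Finset.min'_le _ _ hzf
        exact absurd this (not_le.2 h2)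
      set s := (n + m') / 2 with hs_def
      have hns : n < s := by rw [hs_def]; linarith
      have hsm' : s < m' := by rw [hs_def]; linarith
      have hsq : s < q := lt_of_lt_of_le hsm' hm'q
      have hsN : s ∉ N := hfreeMr s hns hsm'
      have hsuv : s ∈ Ioo u v := ⟨hp.1.trans (hpn.trans hns), hsq.trans hq.2⟩
      have hcr : r (L p) (L s) :=
        cross n hnN hnuv p s hp hpN hsuv hsN hpn hns hfree₁
          (fun z h1 h2 => hfreeMr z h1 (h2.trans hsm'))
      have hsub : N.filter (fun t => s < t ∧ t < q) ⊆
          (N.filter (fun t => p < t ∧ t < q)).erase n := by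
        intro t ht
        have ht' := Finset.mem_filter.1 ht
        refine Finset.mem_erase.2 ⟨?_, Finset.mem_filter.2
          ⟨ht'.1, hpn.trans (hns.trans ht'.2.1), ht'.2.2⟩⟩
        exact ne_of_gt (hns.trans ht'.2.1)
      have hcard' : (N.filter (fun t => s < t ∧ t < q)).card ≤ k := by
        have h1 := Finset.card_le_card hsub
        have h2 : ((N.filter (fun t => p < t ∧ t < q)).erase n).card =
            (N.filter (fun t => p < t ∧ t < q)).card - 1 :=
          Finset.card_erase_of_mem (by rw [hn_def]; exact Finset.min'_mem _ _)
        have h3 : 0 < (N.filter (fun t => p < t ∧ t < q)).card := Finset.card_pos.2 hne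
        omega
      exact htr hcr (ih s q hsuv hsN hq hqN hsq hcard')
    · have hemp := Finset.not_nonempty_iff_eq_empty.1 hne
      refine piece p q hp hpN hq hqN hpq ?_
      intro z h1 h2 hz
      have : z ∈ N.filter (fun t => p < t ∧ t < q) := Finset.mem_filter.2 ⟨hz, h1, h2⟩
      simp [hemp] at this

set_option maxHeartbeats 2000000 in
/-- The deterministic core of the paper's Lemma 3.4.  Let `ψ` be the increasing
fundamental solution of `Ã_θ ψ = 0` on `I = (a,b)` and let `g` be a continuous,
nondecreasing payoff, C² off a finite set `N`, negative below its unique break-even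
point `x₀` and positive above it.  Assuming a single sign change of `Ã_θ g` at `xh`,
the jump conditions on `g'` at `N`, `ψ'/S' → ∞` at `b` and
`sup_{(K,b)∖N} Ã_θ g < 0`, the function `L_ψ g = (g'ψ − ψ'g)/S'` is nonnegative on
`(a,x₀]`, nondecreasing on `(x₀,xh)`, strictly decreasing on `(xh,b)∖N` with limit
`−∞` at `b`, and there is a unique maximizer `x* ∈ [xh,b)` of `g/ψ` over `I`;
moreover `g/ψ` is nondecreasing on `(a,x*]` and strictly decreasing on `[x*,b)`. -/
theorem unique_optimal_threshold
    (a b θ c : ℝ) (hθ : 0 < θ) (hc : c ∈ Ioo a b)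
    (sigma alpha : ℝ → ℝ)
    (hsigc : ContinuousOn sigma (Ioo a b))
    (hsigpos : ∀ x ∈ Ioo a b, 0 < sigma x)
    (halc : ContinuousOn alpha (Ioo a b))
    (ψ ψ' ψ'' : ℝ → ℝ)
    (hψpos : ∀ x ∈ Ioo a b, 0 < ψ x)
    (hψd : ∀ x ∈ Ioo a b, HasDerivAt ψ (ψ' x) x)
    (hψd2 : ∀ x ∈ Ioo a b, HasDerivAt ψ' (ψ'' x) x)
    (hψ''c : ContinuousOn ψ'' (Ioo a b))
    (hψmono : StrictMonoOn ψ (Ioo a b))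
    (hψODE : ∀ x ∈ Ioo a b,
      (1 / 2) * sigma x ^ 2 * ψ'' x + alpha x * ψ' x - θ * ψ x = 0)
    (N : Finset ℝ) (hN : (N : Set ℝ) ⊆ Ioo a b)
    (g g' g'' gp gm : ℝ → ℝ)
    (hgc : ContinuousOn g (Ioo a b))
    (hgmono : MonotoneOn g (Ioo a b))
    (hgd : ∀ x ∈ Ioo a b \ N, HasDerivAt g (g' x) x)
    (hgd2 : ∀ x ∈ Ioo a b \ N, HasDerivAt g' (g'' x) x)
    (hg'c : ContinuousOn g' (Ioo a b \ N))
    (hg''c : ContinuousOn g'' (Ioo a b \ N))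
    (hgp : ∀ x ∈ (N : Set ℝ), HasDerivWithinAt g (gp x) (Ici x) x)
    (hgm : ∀ x ∈ (N : Set ℝ), HasDerivWithinAt g (gm x) (Iic x) x)
    (x₀ : ℝ) (hx₀ : x₀ ∈ Ioo a b) (hgx₀ : g x₀ = 0)
    (hgneg : ∀ x ∈ Ioc a x₀, g x ≤ 0)
    (hgposn : ∀ x ∈ Ioo x₀ b, 0 < g x)
    -- (i): unique sign change of `Ã_θ g` at `xh > x₀`
    (xh : ℝ) (hxh : xh ∈ Ioo x₀ b)
    (hApos : ∀ x ∈ Ioo x₀ xh \ N,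
      0 < (1 / 2) * sigma x ^ 2 * g'' x + alpha x * g' x - θ * g x)
    (hAneg : ∀ x ∈ Ioo xh b \ N,
      (1 / 2) * sigma x ^ 2 * g'' x + alpha x * g' x - θ * g x < 0)
    -- (ii): jump conditions on `g'` at the points of `N`
    (hjump₁ : ∀ x ∈ (N : Set ℝ), x ∈ Ioo x₀ xh → gm x ≤ gp x)
    (hjump₂ : ∀ x ∈ (N : Set ℝ), x ∈ Ioo xh b → gp x ≤ gm x)
    -- (iii): natural boundary behavior at `b`
    (hnat : Tendsto
      (fun x => ψ' x / Real.exp (-(∫ t in c..x, 2 * alpha t / sigma t ^ 2)))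
      (nhdsWithin b (Iio b)) atTop)
    -- (iv): `sup_{(K,b)∖N} (Ã_θ g) < 0` for some `K ∈ (xh,b)`
    (K : ℝ) (hK : K ∈ Ioo xh b)
    (hsup : ∃ δ < (0 : ℝ), ∀ x ∈ Ioo K b \ N,
      (1 / 2) * sigma x ^ 2 * g'' x + alpha x * g' x - θ * g x ≤ δ) :
    (∀ x ∈ Ioc a x₀ \ N,
      0 ≤ (g' x * ψ x - ψ' x * g x) /
        Real.exp (-(∫ t in c..x, 2 * alpha t / sigma t ^ 2))) ∧
    MonotoneOn
      (fun x => (g' x * ψ x - ψ' x * g x) /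
        Real.exp (-(∫ t in c..x, 2 * alpha t / sigma t ^ 2)))
      (Ioo x₀ xh \ N) ∧
    StrictAntiOn
      (fun x => (g' x * ψ x - ψ' x * g x) /
        Real.exp (-(∫ t in c..x, 2 * alpha t / sigma t ^ 2)))
      (Ioo xh b \ N) ∧
    Tendsto
      (fun x => (g' x * ψ x - ψ' x * g x) /
        Real.exp (-(∫ t in c..x, 2 * alpha t / sigma t ^ 2)))
      (nhdsWithin b (Iio b)) atBot ∧
    (∃ xstar : ℝ, xstar ∈ Ico xh b ∧
      (∀ y ∈ Ioo a b, g y / ψ y ≤ g xstar / ψ xstar) ∧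
      (∀ y ∈ Ico xh b, (∀ z ∈ Ioo a b, g z / ψ z ≤ g y / ψ y) → y = xstar) ∧
      MonotoneOn (fun x => g x / ψ x) (Ioc a xstar) ∧
      StrictAntiOn (fun x => g x / ψ x) (Ico xstar b)) := by
  classical
  obtain ⟨hac, hcb⟩ := hc
  obtain ⟨hax₀, hx₀b⟩ := hx₀
  obtain ⟨hx₀xh, hxhb⟩ := hxh
  have haxh : a < xh := hax₀.trans hx₀xh
  have haK : a < K := haxh.trans hK.1
  -- scale density and the functional L
  set ρ : ℝ → ℝ := fun x => 2 * alpha x / sigma x ^ 2 with hρ_def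
  set S : ℝ → ℝ := fun x => Real.exp (-(∫ t in c..x, 2 * alpha t / sigma t ^ 2)) with hS_def
  set L : ℝ → ℝ := fun x => (g' x * ψ x - ψ' x * g x) / S x with hL_def
  set P : ℝ → ℝ := fun x => ψ' x / S x with hP_def
  set Q : ℝ → ℝ := fun x => g x / ψ x with hQ_def
  set m : ℝ → ℝ := fun x => 2 * ψ x / (sigma x ^ 2 * S x) with hm_def
  set Ag : ℝ → ℝ := fun x => (1 / 2) * sigma x ^ 2 * g'' x + alpha x * g' x - θ * g x
    with hAg_def
  have hSpos : ∀ x, 0 < S x := fun x => Real.exp_pos _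
  have hsigne : ∀ x ∈ Ioo a b, sigma x ≠ 0 := fun x hx => (hsigpos x hx).ne'
  have hψne : ∀ x ∈ Ioo a b, ψ x ≠ 0 := fun x hx => (hψpos x hx).ne'
  have hmpos : ∀ x ∈ Ioo a b, 0 < m x := by
    intro x hx
    exact div_pos (by linarith [hψpos x hx]) (mul_pos (pow_pos (hsigpos x hx) 2) (hSpos x))
  -- continuity of the integrand
  have hρcont : ContinuousOn ρ (Ioo a b) := by
    exact (continuousOn_const.mul halc).div (hsigc.pow 2)
      (fun x hx => pow_ne_zero 2 (hsigne x hx))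
  have hρca : ∀ x ∈ Ioo a b, ContinuousAt ρ x :=
    fun x hx => hρcont.continuousAt (isOpen_Ioo.mem_nhds hx)
  -- FTC for the scale function
  have hFd : ∀ x ∈ Ioo a b, HasDerivAt (fun y => ∫ t in c..y, ρ t) (ρ x) x := by
    intro x hx
    refine intervalIntegral.integral_hasDerivAt_right ?_ ?_ (hρca x hx)
    · refine (hρcont.mono ?_).intervalIntegrable
      exact (Set.ordConnected_Ioo).uIcc_subset ⟨hac, hcb⟩ hx
    · exact (hρcont.stronglyMeasurableAtFilter isOpen_Ioo) x hx
  have hSd : ∀ x ∈ Ioo a b, HasDerivAt S (-ρ x * S x) x := by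
    intro x hx
    have h := ((hFd x hx).neg).exp
    simpa [hS_def, hρ_def, mul_comm] using h
  -- membership helpers
  have hmemN : ∀ {x : ℝ}, x ∈ Ioo a b → x ∉ N → x ∈ Ioo a b \ (N : Set ℝ) :=
    fun {x} hx hxN => ⟨hx, fun h => hxN (Finset.mem_coe.1 h)⟩
  have hgca : ∀ x ∈ Ioo a b, ContinuousAt g x :=
    fun x hx => hgc.continuousAt (isOpen_Ioo.mem_nhds hx)
  -- derivative of L off N
  have hLd : ∀ x ∈ Ioo a b, x ∉ N → HasDerivAt L (m x * Ag x) x := by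
    intro x hx hxN
    have hnum : HasDerivAt (fun y => g' y * ψ y - ψ' y * g y)
        (g'' x * ψ x + g' x * ψ' x - (ψ'' x * g x + ψ' x * g' x)) x :=
      ((hgd2 x (hmemN hx hxN)).mul (hψd x hx)).sub
        ((hψd2 x hx).mul (hgd x (hmemN hx hxN)))
    have hdiv := hnum.div (hSd x hx) (hSpos x).ne'
    refine HasDerivAt.congr_deriv (f := L) hdiv ?_
    have hODE := hψODE x hx
    have hS0 : S x ≠ 0 := (hSpos x).ne'
    have hs0 : sigma x ≠ 0 := hsigne x hx
    rw [hm_def, hAg_def, hρ_def]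
    have hψ'' : ψ'' x = (2 * θ * ψ x - 2 * alpha x * ψ' x) / sigma x ^ 2 := by
      field_simp
      linarith
    rw [hψ'']
    field_simp
    ring
  -- derivative of P
  have hPd : ∀ x ∈ Ioo a b, HasDerivAt P (θ * m x) x := by
    intro x hx
    have hdiv := (hψd2 x hx).div (hSd x hx) (hSpos x).ne'
    refine HasDerivAt.congr_deriv (f := P) hdiv ?_
    have hODE := hψODE x hx
    have hS0 : S x ≠ 0 := (hSpos x).ne'
    have hs0 : sigma x ≠ 0 := hsigne x hx
    rw [hm_def, hρ_def]
    have hψ'' : ψ'' x = (2 * θ * ψ x - 2 * alpha x * ψ' x) / sigma x ^ 2 := by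
      field_simp
      linarith
    rw [hψ'']
    field_simp
    ring
  -- nonnegativity of derivatives of monotone functions
  have hψ'0 : ∀ x ∈ Ioo a b, 0 ≤ ψ' x := by
    intro x hx
    have hslope : Tendsto (slope ψ x) (𝓝[>] x) (𝓝 (ψ' x)) :=
      ((hasDerivAt_iff_tendsto_slope).1 (hψd x hx)).mono_left
        (nhdsWithin_mono x (fun y hy => ne_of_gt hy))
    refine ge_of_tendsto hslope ?_
    filter_upwards [Ioo_mem_nhdsGT hx.2] with u hu
    rw [slope_def_field]
    exact div_nonneg (by linarith [hψmono.monotoneOn hx ⟨hx.1.trans hu.1, hu.2⟩ hu.1.le])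
      (by linarith [hu.1])
  have hg'0 : ∀ x ∈ Ioo a b, x ∉ N → 0 ≤ g' x := by
    intro x hx hxN
    have hslope : Tendsto (slope g x) (𝓝[>] x) (𝓝 (g' x)) :=
      ((hasDerivAt_iff_tendsto_slope).1 (hgd x (hmemN hx hxN))).mono_left
        (nhdsWithin_mono x (fun y hy => ne_of_gt hy))
    refine ge_of_tendsto hslope ?_
    filter_upwards [Ioo_mem_nhdsGT hx.2] with u hu
    rw [slope_def_field]
    exact div_nonneg (by linarith [hgmono hx ⟨hx.1.trans hu.1, hu.2⟩ hu.1.le])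
      (by linarith [hu.1])
  -- Part 1 : L is nonnegative on (a, x₀] off N
  have hL1 : ∀ x ∈ Ioo a b, x ∉ N → x ≤ x₀ → 0 ≤ L x := by
    intro x hx hxN hxx₀
    have h1 : 0 ≤ g' x * ψ x := mul_nonneg (hg'0 x hx hxN) (hψpos x hx).le
    have h2 : ψ' x * g x ≤ 0 :=
      mul_nonpos_of_nonneg_of_nonpos (hψ'0 x hx) (hgneg x ⟨hx.1, hxx₀⟩)
    exact div_nonneg (by linarith) (hSpos x).le
  -- strict monotone / antitone of L on puncture-free closed intervals
  have hLup : ∀ p q : ℝ, a < p → q < b → p < q → (∀ z, p ≤ z → z ≤ q → z ∉ N) →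
      (∀ z, p < z → z < q → 0 < Ag z) → L p < L q := by
    intro p q hap hqb hpq hfree hsgn
    have hmem : ∀ z, p ≤ z → z ≤ q → z ∈ Ioo a b :=
      fun z h1 h2 => ⟨lt_of_lt_of_le hap h1, lt_of_le_of_lt h2 hqb⟩
    refine strict_base (f₁ := fun z => m z * Ag z) hpq ?_ ?_ ?_
    · intro z hz
      exact (hLd z (hmem z hz.1 hz.2) (hfree z hz.1 hz.2)).continuousAt.continuousWithinAt
    · intro z h1 h2
      exact hLd z (hmem z h1.le h2.le) (hfree z h1.le h2.le)
    · intro z h1 h2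
      exact mul_pos (hmpos z (hmem z h1.le h2.le)) (hsgn z h1 h2)
  have hLdn : ∀ p q : ℝ, a < p → q < b → p < q → (∀ z, p ≤ z → z ≤ q → z ∉ N) →
      (∀ z, p < z → z < q → Ag z < 0) → L q < L p := by
    intro p q hap hqb hpq hfree hsgn
    have hmem : ∀ z, p ≤ z → z ≤ q → z ∈ Ioo a b :=
      fun z h1 h2 => ⟨lt_of_lt_of_le hap h1, lt_of_le_of_lt h2 hqb⟩
    have h := strict_base (f := fun z => -L z) (f₁ := fun z => -(m z * Ag z)) hpq
      (fun z hz =>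
        ((hLd z (hmem z hz.1 hz.2) (hfree z hz.1 hz.2)).neg).continuousAt.continuousWithinAt)
      (fun z h1 h2 => (hLd z (hmem z h1.le h2.le) (hfree z h1.le h2.le)).neg)
      (fun z h1 h2 => by
        show (0:ℝ) < -(m z * Ag z)
        have := mul_neg_of_pos_of_neg (hmpos z (hmem z h1.le h2.le)) (hsgn z h1 h2)
        linarith)
    have h' : -L p < -L q := h
    linarith
  -- one-sided limits of L at puncture points via the mean value theorem
  have hRight : ∀ n ∈ Ioo a b, ∀ d : ℝ, HasDerivWithinAt g d (Ici n) n →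
      ∀ q, n < q → q ≤ b → (∀ z, n < z → z < q → z ∉ N) →
      ∃ ζ : ℝ → ℝ, (∀ u, n < u → u < q → ζ u ∈ Ioo n u) ∧
        Tendsto (fun u => L (ζ u)) (𝓝[>] n) (𝓝 ((d * ψ n - ψ' n * g n) / S n)) := by
    intro n hn d hd q hnq hqb hfree
    have hsub : ∀ u, n < u → u < q → Icc n u ⊆ Ioo a b :=
      fun u h1 h2 z hz => ⟨hn.1.trans_le hz.1, lt_of_le_of_lt hz.2 (lt_of_lt_of_le h2 hqb)⟩
    have mvt : ∀ u, n < u ∧ u < q → ∃ ξ, ξ ∈ Ioo n u ∧ g' ξ = (g u - g n) / (u - n) := by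
      intro u hu
      obtain ⟨ξ, hξ1, hξ2⟩ := exists_hasDerivAt_eq_slope g g' hu.1
        (hgc.mono (hsub u hu.1 hu.2))
        (fun z hz => hgd z (hmemN (hsub u hu.1 hu.2 ⟨hz.1.le, hz.2.le⟩)
          (hfree z hz.1 (hz.2.trans hu.2))))
      exact ⟨ξ, hξ1, hξ2⟩
    set ζ : ℝ → ℝ := fun u => if h : n < u ∧ u < q then Classical.choose (mvt u h) else n
      with hζ_def
    have hζspec : ∀ u, n < u → u < q → ζ u ∈ Ioo n u ∧ g' (ζ u) = (g u - g n) / (u - n) := by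
      intro u h1 h2
      rw [hζ_def]
      simp only [dif_pos (And.intro h1 h2)]
      exact Classical.choose_spec (mvt u ⟨h1, h2⟩)
    refine ⟨ζ, fun u h1 h2 => (hζspec u h1 h2).1, ?_⟩
    have hEv : ∀ᶠ u in 𝓝[>] n, n < u ∧ u < q := by
      filter_upwards [Ioo_mem_nhdsGT hnq] with u hu using ⟨hu.1, hu.2⟩
    have hslope : Tendsto (slope g n) (𝓝[>] n) (𝓝 d) := by
      have := hasDerivWithinAt_iff_tendsto_slope.1 hd
      rwa [Ici_sdiff_left] at this
    have hg'ζ : Tendsto (fun u => g' (ζ u)) (𝓝[>] n) (𝓝 d) := by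
      refine hslope.congr' ?_
      filter_upwards [hEv] with u hu
      rw [(hζspec u hu.1 hu.2).2, slope_def_field]
    have hζt : Tendsto ζ (𝓝[>] n) (𝓝 n) := by
      refine tendsto_of_tendsto_of_tendsto_of_le_of_le' tendsto_const_nhds
        (tendsto_id.mono_left nhdsWithin_le_nhds) ?_ ?_
      · filter_upwards [hEv] with u hu using ((hζspec u hu.1 hu.2).1.1).le
      · filter_upwards [hEv] with u hu using ((hζspec u hu.1 hu.2).1.2).le
    have hψζ : Tendsto (fun u => ψ (ζ u)) (𝓝[>] n) (𝓝 (ψ n)) :=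
      ((hψd n hn).continuousAt.tendsto).comp hζt
    have hψ'ζ : Tendsto (fun u => ψ' (ζ u)) (𝓝[>] n) (𝓝 (ψ' n)) :=
      ((hψd2 n hn).continuousAt.tendsto).comp hζt
    have hgζ : Tendsto (fun u => g (ζ u)) (𝓝[>] n) (𝓝 (g n)) :=
      ((hgca n hn).tendsto).comp hζt
    have hSζ : Tendsto (fun u => S (ζ u)) (𝓝[>] n) (𝓝 (S n)) :=
      ((hSd n hn).continuousAt.tendsto).comp hζt
    exact ((hg'ζ.mul hψζ).sub (hψ'ζ.mul hgζ)).div hSζ (hSpos n).ne'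
  have hLeft : ∀ n ∈ Ioo a b, ∀ d : ℝ, HasDerivWithinAt g d (Iic n) n →
      ∀ p, a ≤ p → p < n → (∀ z, p < z → z < n → z ∉ N) →
      ∃ ξ : ℝ → ℝ, (∀ u, p < u → u < n → ξ u ∈ Ioo u n) ∧
        Tendsto (fun u => L (ξ u)) (𝓝[<] n) (𝓝 ((d * ψ n - ψ' n * g n) / S n)) := by
    intro n hn d hd p hap hpn hfree
    have hsub : ∀ u, p < u → u < n → Icc u n ⊆ Ioo a b :=
      fun u h1 h2 z hz => ⟨((hap.trans_lt h1).trans_le hz.1), lt_of_le_of_lt hz.2 hn.2⟩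
    have mvt : ∀ u, p < u ∧ u < n → ∃ ξ, ξ ∈ Ioo u n ∧ g' ξ = (g n - g u) / (n - u) := by
      intro u hu
      obtain ⟨ξ, hξ1, hξ2⟩ := exists_hasDerivAt_eq_slope g g' hu.2
        (hgc.mono (hsub u hu.1 hu.2))
        (fun z hz => hgd z (hmemN (hsub u hu.1 hu.2 ⟨hz.1.le, hz.2.le⟩)
          (hfree z (hu.1.trans hz.1) hz.2)))
      exact ⟨ξ, hξ1, hξ2⟩
    set ξ : ℝ → ℝ := fun u => if h : p < u ∧ u < n then Classical.choose (mvt u h) else n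
      with hξ_def
    have hξspec : ∀ u, p < u → u < n → ξ u ∈ Ioo u n ∧ g' (ξ u) = (g n - g u) / (n - u) := by
      intro u h1 h2
      rw [hξ_def]
      simp only [dif_pos (And.intro h1 h2)]
      exact Classical.choose_spec (mvt u ⟨h1, h2⟩)
    refine ⟨ξ, fun u h1 h2 => (hξspec u h1 h2).1, ?_⟩
    have hEv : ∀ᶠ u in 𝓝[<] n, p < u ∧ u < n := by
      filter_upwards [Ioo_mem_nhdsLT hpn] with u hu using ⟨hu.1, hu.2⟩
    have hslope : Tendsto (slope g n) (𝓝[<] n) (𝓝 d) := by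
      have := hasDerivWithinAt_iff_tendsto_slope.1 hd
      rwa [Iic_diff_right] at this
    have hg'ξ : Tendsto (fun u => g' (ξ u)) (𝓝[<] n) (𝓝 d) := by
      refine hslope.congr' ?_
      filter_upwards [hEv] with u hu
      rw [(hξspec u hu.1 hu.2).2, slope_def_field, ← neg_sub (g u) (g n), ← neg_sub u n,
        neg_div_neg_eq]
    have hξt : Tendsto ξ (𝓝[<] n) (𝓝 n) := by
      refine tendsto_of_tendsto_of_tendsto_of_le_of_le'
        (tendsto_id.mono_left nhdsWithin_le_nhds) tendsto_const_nhds ?_ ?_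
      · filter_upwards [hEv] with u hu using ((hξspec u hu.1 hu.2).1.1).le
      · filter_upwards [hEv] with u hu using ((hξspec u hu.1 hu.2).1.2).le
    have hψξ : Tendsto (fun u => ψ (ξ u)) (𝓝[<] n) (𝓝 (ψ n)) :=
      ((hψd n hn).continuousAt.tendsto).comp hξt
    have hψ'ξ : Tendsto (fun u => ψ' (ξ u)) (𝓝[<] n) (𝓝 (ψ' n)) :=
      ((hψd2 n hn).continuousAt.tendsto).comp hξt
    have hgξ : Tendsto (fun u => g (ξ u)) (𝓝[<] n) (𝓝 (g n)) :=
      ((hgca n hn).tendsto).comp hξt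
    have hSξ : Tendsto (fun u => S (ξ u)) (𝓝[<] n) (𝓝 (S n)) :=
      ((hSd n hn).continuousAt.tendsto).comp hξt
    exact ((hg'ξ.mul hψξ).sub (hψ'ξ.mul hgξ)).div hSξ (hSpos n).ne'
  -- Part 2 : L is nondecreasing on (x₀, xh) \ N
  have hcross₁ : ∀ n : ℝ, n ∈ N → n ∈ Ioo x₀ xh → ∀ p q : ℝ, p ∈ Ioo x₀ xh → p ∉ N →
      q ∈ Ioo x₀ xh → q ∉ N → p < n → n < q →
      (∀ z, p < z → z < n → z ∉ N) → (∀ z, n < z → z < q → z ∉ N) → L p ≤ L q := by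
    intro n hnN hn p q hp hpN hq hqN hpn hnq hfree₁ hfree₂
    have hnab : Ioo x₀ xh ⊆ Ioo a b := fun z hz => ⟨hax₀.trans hz.1, hz.2.trans hxhb⟩
    have hnab' : n ∈ Ioo a b := hnab hn
    have hnN' : n ∈ (N : Set ℝ) := Finset.mem_coe.2 hnN
    -- left bound : L p ≤ Lm
    obtain ⟨ξ, hξmem, hξtend⟩ := hLeft n hnab' (gm n) (hgm n hnN') p
      (hax₀.trans hp.1).le hpn hfree₁
    have h1 : L p ≤ (gm n * ψ n - ψ' n * g n) / S n := by
      refine ge_of_tendsto hξtend ?_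
      filter_upwards [Ioo_mem_nhdsLT hpn] with u hu
      have hξu := hξmem u hu.1 hu.2
      refine (hLup p (ξ u) (hax₀.trans hp.1) ((hξu.2.trans hn.2).trans hxhb)
        (hu.1.trans hξu.1) ?_ ?_).le
      · intro z hz1 hz2
        rcases eq_or_lt_of_le hz1 with h | h
        · exact h ▸ hpN
        rcases eq_or_lt_of_le hz2 with h' | h'
        · exact h' ▸ hfree₁ (ξ u) (hu.1.trans hξu.1) hξu.2
        · exact hfree₁ z h (h'.trans hξu.2)
      · intro z hz1 hz2
        refine hApos z ⟨⟨hp.1.trans hz1, (hz2.trans hξu.2).trans hn.2⟩, ?_⟩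
        exact fun hzz => hfree₁ z hz1 (hz2.trans hξu.2) (Finset.mem_coe.1 hzz)
    -- jump : Lm ≤ Lp
    have h2 : (gm n * ψ n - ψ' n * g n) / S n ≤ (gp n * ψ n - ψ' n * g n) / S n := by
      refine (div_le_div_iff_of_pos_right (hSpos n)).2 ?_
      have := mul_le_mul_of_nonneg_right (hjump₁ n hnN' hn) (hψpos n hnab').le
      linarith
    -- right bound : Lp ≤ L q
    obtain ⟨ζ, hζmem, hζtend⟩ := hRight n hnab' (gp n) (hgp n hnN') q hnq
      (hq.2.trans hxhb).le hfree₂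
    have h3 : (gp n * ψ n - ψ' n * g n) / S n ≤ L q := by
      refine le_of_tendsto hζtend ?_
      filter_upwards [Ioo_mem_nhdsGT hnq] with u hu
      have hζu := hζmem u hu.1 hu.2
      refine (hLup (ζ u) q (hax₀.trans (hn.1.trans hζu.1)) (hq.2.trans hxhb)
        (hζu.2.trans hu.2) ?_ ?_).le
      · intro z hz1 hz2
        rcases eq_or_lt_of_le hz1 with h | h
        · exact h ▸ hfree₂ (ζ u) hζu.1 (hζu.2.trans hu.2)
        rcases eq_or_lt_of_le hz2 with h' | h'
        · exact h' ▸ hqN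
        · exact hfree₂ z (hζu.1.trans h) h'
      · intro z hz1 hz2
        refine hApos z ⟨⟨hn.1.trans (hζu.1.trans hz1), hz2.trans hq.2⟩, ?_⟩
        exact fun hzz => hfree₂ z (hζu.1.trans hz1) hz2 (Finset.mem_coe.1 hzz)
    linarith
  have hPart2 : MonotoneOn L (Ioo x₀ xh \ (N : Set ℝ)) := by
    intro x hx y hy hxy
    rcases eq_or_lt_of_le hxy with h | h
    · exact h ▸ le_rfl
    have hxN : x ∉ N := fun hh => hx.2 (Finset.mem_coe.2 hh)
    have hyN : y ∉ N := fun hh => hy.2 (Finset.mem_coe.2 hh)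
    refine chain_aux L N x₀ xh (· ≤ ·) (fun _ _ _ h1 h2 => le_trans h1 h2) ?_ ?_
      (N.filter (fun t => x < t ∧ t < y)).card x y hx.1 hxN hy.1 hyN h le_rfl
    · intro p q hp hpN hq hqN hpq hfree
      refine (hLup p q (hax₀.trans hp.1) (hq.2.trans hxhb) hpq ?_ ?_).le
      · intro z hz1 hz2
        rcases eq_or_lt_of_le hz1 with h' | h'
        · exact h' ▸ hpN
        rcases eq_or_lt_of_le hz2 with h'' | h''
        · exact h'' ▸ hqN
        · exact hfree z h' h''
      · intro z hz1 hz2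
        refine hApos z ⟨⟨hp.1.trans hz1, hz2.trans hq.2⟩, ?_⟩
        exact fun hzz => hfree z hz1 hz2 (Finset.mem_coe.1 hzz)
    · exact hcross₁
  -- Part 3 : L is strictly decreasing on (xh, b) \ N
  have hLdn' : ∀ p q : ℝ, p ∈ Ioo xh b → p ∉ N → q ∈ Ioo xh b → q ∉ N → p < q →
      (∀ z, p < z → z < q → z ∉ N) → L q < L p := by
    intro p q hp hpN hq hqN hpq hfree
    refine hLdn p q (haxh.trans hp.1) hq.2 hpq ?_ ?_
    · intro z hz1 hz2
      rcases eq_or_lt_of_le hz1 with h' | h'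
      · exact h' ▸ hpN
      rcases eq_or_lt_of_le hz2 with h'' | h''
      · exact h'' ▸ hqN
      · exact hfree z h' h''
    · intro z hz1 hz2
      refine hAneg z ⟨⟨hp.1.trans hz1, hz2.trans hq.2⟩, ?_⟩
      exact fun hzz => hfree z hz1 hz2 (Finset.mem_coe.1 hzz)
  have hcross₂ : ∀ n : ℝ, n ∈ N → n ∈ Ioo xh b → ∀ p q : ℝ, p ∈ Ioo xh b → p ∉ N →
      q ∈ Ioo xh b → q ∉ N → p < n → n < q →
      (∀ z, p < z → z < n → z ∉ N) → (∀ z, n < z → z < q → z ∉ N) → L q < L p := by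
    intro n hnN hn p q hp hpN hq hqN hpn hnq hfree₁ hfree₂
    have hnab' : n ∈ Ioo a b := ⟨haxh.trans hn.1, hn.2⟩
    have hnN' : n ∈ (N : Set ℝ) := Finset.mem_coe.2 hnN
    set t := (p + n) / 2 with ht_def
    have hpt : p < t := by rw [ht_def]; linarith
    have htn : t < n := by rw [ht_def]; linarith
    have htN : t ∉ N := hfree₁ t hpt htn
    have htmem : t ∈ Ioo xh b := ⟨hp.1.trans hpt, htn.trans hn.2⟩
    -- L t < L p
    have h0 : L t < L p := hLdn' p t hp hpN htmem htN hpt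
      (fun z hz1 hz2 => hfree₁ z hz1 (hz2.trans htn))
    -- Lm ≤ L t
    obtain ⟨ξ, hξmem, hξtend⟩ := hLeft n hnab' (gm n) (hgm n hnN') p
      (haxh.trans hp.1).le hpn hfree₁
    have h1 : (gm n * ψ n - ψ' n * g n) / S n ≤ L t := by
      refine le_of_tendsto hξtend ?_
      filter_upwards [Ioo_mem_nhdsLT htn] with u hu
      have hξu := hξmem u (hpt.trans hu.1) hu.2
      have htξ : t < ξ u := hu.1.trans hξu.1
      refine (hLdn' t (ξ u) htmem htN ⟨hp.1.trans (hpt.trans htξ), hξu.2.trans hn.2⟩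
        (hfree₁ (ξ u) (hpt.trans htξ) hξu.2) htξ
        (fun z hz1 hz2 => hfree₁ z (hpt.trans hz1) (hz2.trans hξu.2))).le
    -- Lp ≤ Lm
    have h2 : (gp n * ψ n - ψ' n * g n) / S n ≤ (gm n * ψ n - ψ' n * g n) / S n := by
      refine (div_le_div_iff_of_pos_right (hSpos n)).2 ?_
      have := mul_le_mul_of_nonneg_right (hjump₂ n hnN' hn) (hψpos n hnab').le
      linarith
    -- L q ≤ Lp
    obtain ⟨ζ, hζmem, hζtend⟩ := hRight n hnab' (gp n) (hgp n hnN') q hnq hq.2.le hfree₂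
    have h3 : L q ≤ (gp n * ψ n - ψ' n * g n) / S n := by
      refine ge_of_tendsto hζtend ?_
      filter_upwards [Ioo_mem_nhdsGT hnq] with u hu
      have hζu := hζmem u hu.1 hu.2
      have hζq : ζ u < q := hζu.2.trans hu.2
      refine (hLdn' (ζ u) q ⟨hn.1.trans hζu.1, (hζq.trans hq.2)⟩
        (hfree₂ (ζ u) hζu.1 hζq) hq hqN hζq
        (fun z hz1 hz2 => hfree₂ z (hζu.1.trans hz1) hz2)).le
    linarith
  have hPart3 : StrictAntiOn L (Ioo xh b \ (N : Set ℝ)) := by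
    intro x hx y hy hxy
    have hxN : x ∉ N := fun hh => hx.2 (Finset.mem_coe.2 hh)
    have hyN : y ∉ N := fun hh => hy.2 (Finset.mem_coe.2 hh)
    exact chain_aux L N xh b (fun s t => t < s) (fun _ _ _ h1 h2 => h2.trans h1)
      (fun p q hp hpN hq hqN hpq hfree => hLdn' p q hp hpN hq hqN hpq hfree)
      hcross₂ (N.filter (fun t => x < t ∧ t < y)).card x y hx.1 hxN hy.1 hyN hxy le_rfl
  -- Part 4 : L tends to -∞ at b
  obtain ⟨δ, hδ0, hδ⟩ := hsup
  set W : ℝ := max K (if hNe : N.Nonempty then N.max' hNe else K) with hW_def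
  have hKW : K ≤ W := le_max_left _ _
  have hWb : W < b := by
    rw [hW_def]
    refine max_lt hK.2 ?_
    split
    · next hNe => exact (hN (Finset.mem_coe.2 (N.max'_mem hNe))).2
    · exact hK.2
  have hWN : ∀ z, W < z → z ∉ N := by
    intro z hz hzN
    have hNe : N.Nonempty := ⟨z, hzN⟩
    have h1 : z ≤ N.max' hNe := N.le_max' z hzN
    have h2 : (if hNe' : N.Nonempty then N.max' hNe' else K) = N.max' hNe := dif_pos hNe
    have : z ≤ W := by rw [hW_def]; rw [h2] at *; exact le_max_of_le_right h1
    exact absurd hz (not_lt.2 this)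
  set y₀ : ℝ := (W + b) / 2 with hy₀_def
  have hWy₀ : W < y₀ := by rw [hy₀_def]; linarith
  have hy₀b : y₀ < b := by rw [hy₀_def]; linarith
  have hy₀ab : y₀ ∈ Ioo a b := ⟨haK.trans (lt_of_le_of_lt hKW hWy₀), hy₀b⟩
  have hbound : ∀ x, y₀ < x → x < b →
      L x ≤ (L y₀ - δ / θ * P y₀) + δ / θ * P x := by
    intro x h1 h2
    have hmem : ∀ z, y₀ ≤ z → z ≤ x → z ∈ Ioo a b :=
      fun z hz1 hz2 => ⟨hy₀ab.1.trans_le hz1, lt_of_le_of_lt hz2 h2⟩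
    have hmemN' : ∀ z, y₀ ≤ z → z ∉ N :=
      fun z hz1 => hWN z (hWy₀.trans_le hz1)
    have key := mono_base (f := fun z => δ / θ * P z - L z)
      (f₁ := fun z => δ / θ * (θ * m z) - m z * Ag z) h1
      (fun z hz => (((hPd z (hmem z hz.1 hz.2)).const_mul (δ / θ)).sub
        (hLd z (hmem z hz.1 hz.2) (hmemN' z hz.1))).continuousAt.continuousWithinAt)
      (fun z hz1 hz2 => ((hPd z (hmem z hz1.le hz2.le)).const_mul (δ / θ)).sub
        (hLd z (hmem z hz1.le hz2.le) (hmemN' z hz1.le)))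
      (fun z hz1 hz2 => by
        show (0:ℝ) ≤ δ / θ * (θ * m z) - m z * Ag z
        have hzab := hmem z hz1.le hz2.le
        have hA : Ag z ≤ δ := hδ z ⟨⟨lt_of_le_of_lt hKW (hWy₀.trans hz1), hzab.2⟩,
          fun hh => hmemN' z hz1.le (Finset.mem_coe.1 hh)⟩
        have hθne : θ ≠ 0 := hθ.ne'
        have e1 : δ / θ * (θ * m z) = δ * m z := by field_simp
        have e2 : m z * Ag z ≤ m z * δ := mul_le_mul_of_nonneg_left hA (hmpos z hzab).le
        have e3 : m z * δ = δ * m z := mul_comm _ _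
        rw [e1]
        linarith)
    have key' : δ / θ * P y₀ - L y₀ ≤ δ / θ * P x - L x := key
    linarith
  have hPtop : Tendsto P (𝓝[<] b) atTop := hnat
  have hPart4 : Tendsto L (𝓝[<] b) atBot := by
    refine tendsto_atBot_mono' _ ?_ (tendsto_atBot_add_const_left _ (L y₀ - δ / θ * P y₀)
      ((tendsto_const_mul_atBot_of_neg (div_neg_of_neg_of_pos hδ0 hθ)).2 hPtop))
    filter_upwards [Ioo_mem_nhdsLT hy₀b] with x hx using hbound x hx.1 hx.2
  -- L is strictly positive on (x₀, xh) off N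
  have hx₀ab : x₀ ∈ Ioo a b := ⟨hax₀, hx₀b⟩
  set Mf := N.filter (fun t => x₀ < t ∧ t < xh) with hMf_def
  set n₁ : ℝ := if h : Mf.Nonempty then Mf.min' h else xh with hn₁_def
  have hn₁mem : x₀ < n₁ ∧ n₁ ≤ xh := by
    rw [hn₁_def]
    split
    · next h =>
      have := Finset.mem_filter.1 (Mf.min'_mem h)
      exact ⟨this.2.1, this.2.2.le⟩
    · exact ⟨hx₀xh, le_rfl⟩
  have hfree₀ : ∀ z, x₀ < z → z < n₁ → z ∉ N := by
    intro z h1 h2 hzN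
    have hzf : z ∈ Mf := Finset.mem_filter.2 ⟨hzN, h1, lt_of_lt_of_le h2 hn₁mem.2⟩
    have hNe : Mf.Nonempty := ⟨z, hzf⟩
    have : n₁ ≤ z := by rw [hn₁_def]; simp only [dif_pos hNe]; exact Finset.min'_le _ _ hzf
    exact absurd this (not_le.2 h2)
  set d₀ : ℝ := if x₀ ∈ N then gp x₀ else g' x₀ with hd₀_def
  have hd₀ : HasDerivWithinAt g d₀ (Ici x₀) x₀ := by
    rw [hd₀_def]
    split
    · next h => exact hgp x₀ (Finset.mem_coe.2 h)
    · next h => exact (hgd x₀ (hmemN hx₀ab h)).hasDerivWithinAt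
  have hd₀0 : 0 ≤ d₀ := by
    have hslope : Tendsto (slope g x₀) (𝓝[>] x₀) (𝓝 d₀) := by
      have := hasDerivWithinAt_iff_tendsto_slope.1 hd₀
      rwa [Ici_sdiff_left] at this
    refine ge_of_tendsto hslope ?_
    filter_upwards [Ioo_mem_nhdsGT hx₀b] with u hu
    rw [slope_def_field]
    exact div_nonneg (by linarith [hgmono hx₀ab ⟨hax₀.trans hu.1, hu.2⟩ hu.1.le])
      (by linarith [hu.1])
  have hLm₀ : 0 ≤ (d₀ * ψ x₀ - ψ' x₀ * g x₀) / S x₀ := by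
    rw [hgx₀]
    exact div_nonneg (by simp [mul_nonneg hd₀0 (hψpos x₀ hx₀ab).le]) (hSpos x₀).le
  have hLpos1 : ∀ z, x₀ < z → z < xh → z ∉ N → 0 < L z := by
    intro z hz1 hz2 hzN
    set w : ℝ := (x₀ + min n₁ z) / 2 with hw_def
    have hminpos : x₀ < min n₁ z := lt_min hn₁mem.1 hz1
    have hx₀w : x₀ < w := by rw [hw_def]; linarith
    have hwmin : w < min n₁ z := by rw [hw_def]; linarith
    have hwn₁ : w < n₁ := hwmin.trans_le (min_le_left _ _)
    have hwz : w < z := hwmin.trans_le (min_le_right _ _)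
    have hwxh : w < xh := lt_of_lt_of_le hwn₁ hn₁mem.2
    have hwN : w ∉ N := hfree₀ w hx₀w hwn₁
    set w' : ℝ := (x₀ + w) / 2 with hw'_def
    have hx₀w' : x₀ < w' := by rw [hw'_def]; linarith
    have hw'w : w' < w := by rw [hw'_def]; linarith
    have hw'N : w' ∉ N := hfree₀ w' hx₀w' (hw'w.trans hwn₁)
    -- L z ≥ L w
    have h1 : L w ≤ L z :=
      hPart2 ⟨⟨hx₀w, hwxh⟩, fun hh => hwN (Finset.mem_coe.1 hh)⟩
        ⟨⟨hz1, hz2⟩, fun hh => hzN (Finset.mem_coe.1 hh)⟩ hwz.le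
    -- L w > L w'
    have h2 : L w' < L w := by
      refine hLup w' w (hax₀.trans hx₀w') (hwxh.trans hxhb) hw'w ?_ ?_
      · intro t ht1 ht2
        rcases eq_or_lt_of_le ht1 with h | h
        · exact h ▸ hw'N
        rcases eq_or_lt_of_le ht2 with h' | h'
        · exact h' ▸ hwN
        · exact hfree₀ t (hx₀w'.trans h) (h'.trans hwn₁)
      · intro t ht1 ht2
        refine hApos t ⟨⟨hx₀w'.trans ht1, (ht2.trans hwxh)⟩, ?_⟩
        exact fun hh => hfree₀ t (hx₀w'.trans ht1) (ht2.trans hwn₁) (Finset.mem_coe.1 hh)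
    -- L w' ≥ Lm₀
    obtain ⟨ζ, hζmem, hζtend⟩ := hRight x₀ hx₀ab d₀ hd₀ w' hx₀w'
      ((hw'w.trans hwxh).trans hxhb).le
      (fun t ht1 ht2 => hfree₀ t ht1 (ht2.trans (hw'w.trans hwn₁)))
    have h3 : (d₀ * ψ x₀ - ψ' x₀ * g x₀) / S x₀ ≤ L w' := by
      refine le_of_tendsto hζtend ?_
      filter_upwards [Ioo_mem_nhdsGT hx₀w'] with u hu
      have hζu := hζmem u hu.1 hu.2
      have hζw' : ζ u < w' := hζu.2.trans hu.2
      refine (hLup (ζ u) w' (hax₀.trans hζu.1) ((hw'w.trans hwxh).trans hxhb) hζw' ?_ ?_).le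
      · intro t ht1 ht2
        rcases eq_or_lt_of_le ht2 with h | h
        · exact h ▸ hw'N
        · exact hfree₀ t (hζu.1.trans_le ht1) (h.trans (hw'w.trans hwn₁))
      · intro t ht1 ht2
        refine hApos t ⟨⟨hζu.1.trans ht1, (ht2.trans hw'w).trans hwxh⟩, ?_⟩
        exact fun hh => hfree₀ t (hζu.1.trans ht1)
          (ht2.trans (hw'w.trans hwn₁)) (Finset.mem_coe.1 hh)
    linarith
  -- Part 5 : the ratio Q = g/ψ and the optimal threshold
  have hψcont : ContinuousOn ψ (Ioo a b) :=
    fun z hz => (hψd z hz).continuousAt.continuousWithinAt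
  have hQc : ContinuousOn Q (Ioo a b) := hgc.div hψcont (fun z hz => hψne z hz)
  have hQd : ∀ z ∈ Ioo a b, z ∉ N → HasDerivAt Q (L z * S z / ψ z ^ 2) z := by
    intro z hz hzN
    have h := (hgd z (hmemN hz hzN)).div (hψd z hz) (hψne z hz)
    have hLS : L z * S z = g' z * ψ z - ψ' z * g z := div_mul_cancel₀ _ (hSpos z).ne'
    refine HasDerivAt.congr_deriv (f := Q) h ?_
    rw [hLS]
    ring
  -- a point past all punctures where L is negative
  obtain ⟨y₁, hy₁mem, hy₁neg⟩ : ∃ y₁, y₁ ∈ Ioo W b ∧ L y₁ < 0 := by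
    have hev : ∀ᶠ x in 𝓝[<] b, L x < 0 := hPart4.eventually (eventually_lt_atBot 0)
    obtain ⟨y₁, h1, h2⟩ :=
      ((eventually_of_mem (Ioo_mem_nhdsLT hWb) (fun x hx => hx)).and hev).exists
    exact ⟨y₁, h1, h2⟩
  have hy₁N : y₁ ∉ N := hWN y₁ hy₁mem.1
  have hxhW : xh < W := lt_of_lt_of_le hK.1 hKW
  set T : Set ℝ := {x | x ∈ Ioo xh b ∧ x ∉ N ∧ L x ≤ 0} with hT_def
  have hy₁T : y₁ ∈ T := ⟨⟨hxhW.trans hy₁mem.1, hy₁mem.2⟩, hy₁N, hy₁neg.le⟩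
  have hTne : T.Nonempty := ⟨y₁, hy₁T⟩
  have hTbdd : BddBelow T := ⟨xh, fun t ht => ht.1.1.le⟩
  set xs : ℝ := sInf T with hxs_def
  have hxs_ge : xh ≤ xs := le_csInf hTne (fun t ht => ht.1.1.le)
  have hxs_lt : xs < b := lt_of_le_of_lt (csInf_le hTbdd hy₁T) hy₁mem.2
  have haxs : a < xs := haxh.trans_le hxs_ge
  have hxsab : xs ∈ Ioo a b := ⟨haxs, hxs_lt⟩
  have hLpos2 : ∀ z, xh < z → z < xs → z ∉ N → 0 < L z := by
    intro z h1 h2 hzN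
    by_contra hle
    have hzT : z ∈ T := ⟨⟨h1, h2.trans hxs_lt⟩, hzN, not_lt.1 hle⟩
    exact absurd (csInf_le hTbdd hzT) (not_le.2 h2)
  have hLneg : ∀ z, xs < z → z < b → z ∉ N → L z < 0 := by
    intro z h1 h2 hzN
    obtain ⟨t, htT, htz⟩ := exists_lt_of_csInf_lt hTne h1
    have hlt : L z < L t := hPart3 ⟨htT.1, fun hh => htT.2.1 (Finset.mem_coe.1 hh)⟩
      ⟨⟨hxs_ge.trans_lt h1, h2⟩, fun hh => hzN (Finset.mem_coe.1 hh)⟩ htz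
    exact hlt.trans_le htT.2.2
  have hLpos : ∀ z, x₀ < z → z < xs → z ∉ N → z ≠ xh → 0 < L z := by
    intro z h1 h2 hzN hzxh
    rcases lt_or_gt_of_ne hzxh with h | h
    · exact hLpos1 z h1 h hzN
    · exact hLpos2 z h h2 hzN
  -- Q is nondecreasing on (a, xs]
  have hQmono : ∀ x y, x ∈ Ioc a xs → y ∈ Ioc a xs → x < y → Q x ≤ Q y := by
    intro x y hx hy hxy
    by_cases hy₀ : y ≤ x₀
    · refine mono_aux Q (fun z => L z * S z / ψ z ^ 2) N
        ((N.filter (fun t => x < t ∧ t < y)).card) x y hxy le_rfl ?_ ?_ ?_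
      · exact hQc.mono
          (fun t ht => ⟨lt_of_lt_of_le hx.1 ht.1, lt_of_le_of_lt (ht.2.trans hy₀) hx₀b⟩)
      · intro z h1 h2 hzN
        exact hQd z ⟨hx.1.trans h1, lt_of_le_of_lt (h2.le.trans hy₀) hx₀b⟩ hzN
      · intro z h1 h2 hzN
        have hzab : z ∈ Ioo a b := ⟨hx.1.trans h1, lt_of_le_of_lt (h2.le.trans hy₀) hx₀b⟩
        have hh : 0 ≤ L z := hL1 z hzab hzN (h2.le.trans hy₀)
        exact div_nonneg (mul_nonneg hh (hSpos z).le) (sq_nonneg _)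
    · push_neg at hy₀
      by_cases hx₀' : x ≤ x₀
      · have hQx : Q x ≤ 0 := div_nonpos_of_nonpos_of_nonneg (hgneg x ⟨hx.1, hx₀'⟩)
          (hψpos x ⟨hx.1, hx₀'.trans_lt hx₀b⟩).le
        have hQy : 0 < Q y := div_pos (hgposn y ⟨hy₀, lt_of_le_of_lt hy.2 hxs_lt⟩)
          (hψpos y ⟨hy.1, lt_of_le_of_lt hy.2 hxs_lt⟩)
        linarith
      · push_neg at hx₀'
        refine mono_aux Q (fun z => L z * S z / ψ z ^ 2) (insert xh N)
          (((insert xh N).filter (fun t => x < t ∧ t < y)).card) x y hxy le_rfl ?_ ?_ ?_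
        · exact hQc.mono
            (fun t ht => ⟨lt_of_lt_of_le hx.1 ht.1, lt_of_le_of_lt (ht.2.trans hy.2) hxs_lt⟩)
        · intro z h1 h2 hzN
          have hzN' : z ∉ N := fun hh => hzN (Finset.mem_insert_of_mem hh)
          exact hQd z ⟨hx.1.trans h1, lt_of_le_of_lt (h2.le.trans hy.2) hxs_lt⟩ hzN'
        · intro z h1 h2 hzN
          have hzN' : z ∉ N := fun hh => hzN (Finset.mem_insert_of_mem hh)
          have hzxh : z ≠ xh := fun hh => hzN (hh ▸ Finset.mem_insert_self _ _)
          have hzxs : z ≤ xs := h2.le.trans hy.2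
          have hL : 0 < L z := hLpos z (hx₀'.trans h1) (lt_of_lt_of_le h2 hy.2) hzN' hzxh
          exact (div_pos (mul_pos hL (hSpos z))
            (pow_pos (hψpos z ⟨hx.1.trans h1, lt_of_le_of_lt hzxs hxs_lt⟩) 2)).le
  -- Q is strictly decreasing on [xs, b)
  have hQanti : ∀ x y, x ∈ Ico xs b → y ∈ Ico xs b → x < y → Q y < Q x := by
    intro x y hx hy hxy
    have hmem : ∀ z, x ≤ z → z ≤ y → z ∈ Ioo a b :=
      fun z h1 h2 => ⟨haxs.trans_le (hx.1.trans h1), lt_of_le_of_lt h2 hy.2⟩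
    have h := strict_aux (fun z => -Q z) (fun z => -(L z * S z / ψ z ^ 2)) N
      ((N.filter (fun t => x < t ∧ t < y)).card) x y hxy le_rfl
      ((hQc.mono (fun t ht => hmem t ht.1 ht.2)).neg)
      (fun z h1 h2 hzN => (hQd z (hmem z h1.le h2.le) hzN).neg)
      (fun z h1 h2 hzN => by
        show (0:ℝ) < -(L z * S z / ψ z ^ 2)
        have hzab := hmem z h1.le h2.le
        have hL : L z < 0 := hLneg z (hx.1.trans_lt h1) hzab.2 hzN
        have := div_neg_of_neg_of_pos (mul_neg_of_neg_of_pos hL (hSpos z))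
          (pow_pos (hψpos z hzab) 2)
        linarith)
    have h' : -Q x < -Q y := h
    linarith
  -- strict increase of Q on [xh, xs]
  have hQstrict : ∀ y, xh ≤ y → y < xs → Q y < Q xs := by
    intro y h1 h2
    have hmem : ∀ z, y ≤ z → z ≤ xs → z ∈ Ioo a b :=
      fun z hz1 hz2 => ⟨haxh.trans_le (h1.trans hz1), lt_of_le_of_lt hz2 hxs_lt⟩
    refine strict_aux Q (fun z => L z * S z / ψ z ^ 2) N
      ((N.filter (fun t => y < t ∧ t < xs)).card) y xs h2 le_rfl
      (hQc.mono (fun t ht => hmem t ht.1 ht.2))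
      (fun z hz1 hz2 hzN => hQd z (hmem z hz1.le hz2.le) hzN) ?_
    intro z hz1 hz2 hzN
    have hL : 0 < L z := hLpos2 z (h1.trans_lt hz1) hz2 hzN
    exact div_pos (mul_pos hL (hSpos z)) (pow_pos (hψpos z (hmem z hz1.le hz2.le)) 2)
  -- assemble the five conclusions
  refine ⟨?_, hPart2, hPart3, hPart4, xs, ⟨hxs_ge, hxs_lt⟩, ?_, ?_, ?_, ?_⟩
  · intro x hx
    exact hL1 x ⟨hx.1.1, hx.1.2.trans_lt hx₀b⟩ (fun hh => hx.2 (Finset.mem_coe.2 hh)) hx.1.2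
  · -- maximizer
    intro y hy
    by_cases hyx : y ≤ xs
    · rcases eq_or_lt_of_le hyx with h | h
      · exact h ▸ le_rfl
      · exact hQmono y xs ⟨hy.1, hyx⟩ ⟨haxs, le_rfl⟩ h
    · exact (hQanti xs y ⟨le_rfl, hxs_lt⟩ ⟨(not_le.1 hyx).le, hy.2⟩ (not_le.1 hyx)).le
  · -- uniqueness
    intro y hy hmax
    rcases lt_trichotomy y xs with h | h | h
    · have h1 : Q y < Q xs := hQstrict y hy.1 h
      have h2 : Q xs ≤ Q y := hmax xs hxsab
      linarith
    · exact h
    · have h1 : Q y < Q xs := hQanti xs y ⟨le_rfl, hxs_lt⟩ ⟨h.le, hy.2⟩ h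
      have h2 : Q xs ≤ Q y := hmax xs hxsab
      linarith
  · -- monotone on (a, xs]
    intro x hx y hy hxy
    rcases eq_or_lt_of_le hxy with h | h
    · exact h ▸ le_rfl
    · exact hQmono x y hx hy h
  · -- strictly decreasing on [xs, b)
    intro x hx y hy hxy
    exact hQanti x y hx hy hxy
end

section
/- Let g : I → ℝ and suppose x* ∈ [x,b) satisfies g(y)/ψ(y) ≤ g(x*)/ψ(x*) for all y ∈ [x,b). Then, with t* = (1/r)·ln(ψ(x*)/ψ(x)) ≥ 0, one has X̂(t*) = x* and sup_{t≥0} e^{−rt} g(X̂(t)) = e^{−rt*} g(X̂(t*)) = ψ(x)·g(x*)/ψ(x*); that is, the value of the deterministic timing problem V̂(x) = sup_{t≥0} e^{−rt} g(X̂(t)) equals ψ(x)·sup_{y ∈ [x,b)} g(y)/ψ(y) and is attained at t*. -/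
open Set

/-- Certainty-equivalent valuation (core of the paper's Theorem 6.1):
if `x* ∈ [x,b)` maximizes `g/ψ` over `[x,b)`, then with
`t* = (1/r)·ln(ψ(x*)/ψ(x)) ≥ 0` one has `X̂(t*) = x*` and the deterministic value
`V̂(x) = sup_{t ≥ 0} e^{−rt} g(X̂(t))` is attained at `t*` and equals
`ψ(x)·g(x*)/ψ(x*)`. -/
theorem certainty_equivalent_valuation
    (a b r : ℝ) (hr : 0 < r)
    (ψ ψ' : ℝ → ℝ)
    (hψpos : ∀ x ∈ Ioo a b, 0 < ψ x)
    (hψd : ∀ x ∈ Ioo a b, HasDerivAt ψ (ψ' x) x)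
    (hψ'pos : ∀ x ∈ Ioo a b, 0 < ψ' x)
    (x : ℝ) (hx : x ∈ Ioo a b)
    (X : ℝ → ℝ)
    (hX0 : X 0 = x)
    (hXmem : ∀ t : ℝ, 0 ≤ t → X t ∈ Ioo a b)
    (hXd : ∀ t : ℝ, 0 ≤ t → HasDerivAt X (r * ψ (X t) / ψ' (X t)) t)
    (g : ℝ → ℝ)
    (xstar : ℝ) (hxstar : xstar ∈ Ico x b)
    (hmax : ∀ y ∈ Ico x b, g y / ψ y ≤ g xstar / ψ xstar) :
    0 ≤ (1 / r) * Real.log (ψ xstar / ψ x) ∧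
    X ((1 / r) * Real.log (ψ xstar / ψ x)) = xstar ∧
    (∀ t : ℝ, 0 ≤ t →
      Real.exp (-r * t) * g (X t) ≤
        Real.exp (-r * ((1 / r) * Real.log (ψ xstar / ψ x))) *
          g (X ((1 / r) * Real.log (ψ xstar / ψ x)))) ∧
    Real.exp (-r * ((1 / r) * Real.log (ψ xstar / ψ x))) *
        g (X ((1 / r) * Real.log (ψ xstar / ψ x))) =
      ψ x * (g xstar / ψ xstar) := by
  have hxstarI : xstar ∈ Ioo a b := ⟨lt_of_lt_of_le hx.1 hxstar.1, hxstar.2⟩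
  have hψx : 0 < ψ x := hψpos x hx
  have hψxs : 0 < ψ xstar := hψpos xstar hxstarI
  -- ψ is strictly monotone on Ioo a b
  have hmono : StrictMonoOn ψ (Ioo a b) := by
    apply strictMonoOn_of_deriv_pos (convex_Ioo a b)
    · exact fun y hy => (hψd y hy).continuousAt.continuousWithinAt
    · intro y hy
      rw [interior_Ioo] at hy
      rw [(hψd y hy).deriv]
      exact hψ'pos y hy
  -- the key ODE identity: ψ(X t) = ψ x * exp (r t)
  set H : ℝ → ℝ := fun t => ψ (X t) * Real.exp (-r * t) with hHdef
  have hHd : ∀ s : ℝ, 0 ≤ s → HasDerivAt H 0 s := by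
    intro s hs0
    have hmem := hXmem s hs0
    have hψ'ne : ψ' (X s) ≠ 0 := ne_of_gt (hψ'pos _ hmem)
    have h1 : HasDerivAt (fun t => ψ (X t))
        (ψ' (X s) * (r * ψ (X s) / ψ' (X s))) s :=
      (hψd (X s) hmem).comp s (hXd s hs0)
    have h1' : HasDerivAt (fun t => ψ (X t)) (r * ψ (X s)) s := by
      convert h1 using 1; field_simp
    have h2 : HasDerivAt (fun t => Real.exp (-r * t))
        (Real.exp (-r * s) * (-r)) s := by
      have hlin : HasDerivAt (fun t : ℝ => -r * t) (-r) s := by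
        simpa using (hasDerivAt_id s).const_mul (-r)
      exact hlin.exp
    have : HasDerivAt (fun t => ψ (X t) * Real.exp (-r * t))
        (r * ψ (X s) * Real.exp (-r * s) + ψ (X s) * (Real.exp (-r * s) * -r)) s :=
      h1'.mul h2
    convert this using 1
    ring
  have hkey : ∀ t : ℝ, 0 ≤ t → ψ (X t) = ψ x * Real.exp (r * t) := by
    intro T hT
    have hcont : ContinuousOn H (Icc 0 T) := fun s hs =>
      (hHd s hs.1).continuousAt.continuousWithinAt
    have hconst := constant_of_has_deriv_right_zero (f := H) (a := 0) (b := T)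
      hcont (fun s hs => (hHd s hs.1).hasDerivWithinAt) T (right_mem_Icc.2 hT)
    have hH0 : H 0 = ψ x := by simp [hHdef, hX0]
    have : ψ (X T) * Real.exp (-r * T) = ψ x := by rw [← hH0]; exact hconst
    have hexp : Real.exp (-r * T) ≠ 0 := Real.exp_ne_zero _
    have := congrArg (· * Real.exp (r * T)) this
    simpa [mul_assoc, ← Real.exp_add] using this
  -- X stays in [x, b)
  have hXIco : ∀ t : ℝ, 0 ≤ t → X t ∈ Ico x b := by
    intro t ht
    have hmem := hXmem t ht
    refine ⟨?_, hmem.2⟩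
    by_contra h
    push_neg at h
    have h1 : ψ (X t) < ψ x := hmono hmem hx h
    have h2 : ψ x ≤ ψ (X t) := by
      rw [hkey t ht]
      nlinarith [Real.one_le_exp (by positivity : (0:ℝ) ≤ r * t)]
    linarith
  have hψle : ψ x ≤ ψ xstar := by
    rcases eq_or_lt_of_le hxstar.1 with h | h
    · rw [h]
    · exact le_of_lt (hmono hx hxstarI h)
  set tstar := (1 / r) * Real.log (ψ xstar / ψ x) with hts
  have hts0 : 0 ≤ tstar := by
    apply mul_nonneg (by positivity)
    apply Real.log_nonneg
    rw [le_div_iff₀ hψx]; linarith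
  have hrts : r * tstar = Real.log (ψ xstar / ψ x) := by
    rw [hts]; field_simp
  have hXts : X tstar = xstar := by
    have h1 : ψ (X tstar) = ψ xstar := by
      rw [hkey tstar hts0, hrts, Real.exp_log (by positivity)]
      field_simp
    exact hmono.injOn (hXmem tstar hts0) hxstarI h1
  have hexpt : ∀ t : ℝ, 0 ≤ t → Real.exp (-r * t) = ψ x / ψ (X t) := by
    intro t ht
    rw [hkey t ht]
    rw [eq_div_iff (by positivity)]
    have h0 : Real.exp (-r * t) * Real.exp (r * t) = 1 := by
      rw [← Real.exp_add]; simp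
    linear_combination ψ x * h0
  have hRHS : Real.exp (-r * tstar) * g (X tstar) = ψ x * (g xstar / ψ xstar) := by
    rw [hXts, hexpt tstar hts0, hXts]
    field_simp
  refine ⟨hts0, hXts, ?_, hRHS⟩
  intro t ht
  rw [hRHS, hexpt t ht]
  have hψXt : 0 < ψ (X t) := hψpos _ (hXmem t ht)
  have h1 : g (X t) / ψ (X t) ≤ g xstar / ψ xstar := hmax _ (hXIco t ht)
  calc ψ x / ψ (X t) * g (X t) = ψ x * (g (X t) / ψ (X t)) := by ring
    _ ≤ ψ x * (g xstar / ψ xstar) := by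
        exact mul_le_mul_of_nonneg_left h1 (le_of_lt hψx)
end

section
/- Assume λ > 0. For θ > 0 let k̃_θ denote the unique positive root of (1/2)σ²k² + (μ + γλm̄)k − θ = 0, i.e. k̃_θ = −(μ+γλm̄)/σ² + √(((μ+γλm̄)/σ²)² + 2θ/σ²). Then the unique positive root k₁ of F satisfies k̃_r < k₁ < k̃_{r+λ}. -/
open Set MeasureTheory

set_option maxHeartbeats 1600000 in
/-- Sandwich for the positive root of the arithmetic characteristic equation
(Lemma 3.2 of the paper, Section 7.1): if `λ > 0` and `k̃_θ` denotes the positive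
root of `(1/2)σ²k² + (μ+γλm̄)k − θ = 0`, then `k̃_r < k₁ < k̃_{r+λ}`. -/
theorem arithmetic_root_sandwich
    (sigma gamma mu lam r : ℝ)
    (hsigma : 0 < sigma) (hgamma : 0 < gamma) (hlam : 0 < lam) (hr : 0 < r)
    (m : Measure ℝ) [IsProbabilityMeasure m]
    (hm : m (Ioi 0)ᶜ = 0)
    (hint : Integrable (fun z => z) m)
    (mbar : ℝ) (hmbar : mbar = ∫ z, z ∂m)
    (k₁ : ℝ) (hk₁pos : 0 < k₁)
    (hk₁root : 1 / 2 * sigma ^ 2 * k₁ ^ 2 + (mu + gamma * lam * mbar) * k₁ +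
      lam * ∫ z, Real.exp (-(gamma * z * k₁)) ∂m - (r + lam) = 0) :
    -((mu + gamma * lam * mbar) / sigma ^ 2) +
        Real.sqrt (((mu + gamma * lam * mbar) / sigma ^ 2) ^ 2 + 2 * r / sigma ^ 2)
      < k₁ ∧
    k₁ < -((mu + gamma * lam * mbar) / sigma ^ 2) +
        Real.sqrt (((mu + gamma * lam * mbar) / sigma ^ 2) ^ 2 +
          2 * (r + lam) / sigma ^ 2) := by
  have hσ2 : (0:ℝ) < sigma ^ 2 := by positivity
  set b : ℝ := mu + gamma * lam * mbar with hb
  set I : ℝ := ∫ z, Real.exp (-(gamma * z * k₁)) ∂m with hI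
  have hae : ∀ᵐ z ∂m, 0 < z := by
    rw [ae_iff]
    convert hm using 2
    ext z; simp
  have hmeas : AEStronglyMeasurable (fun z => Real.exp (-(gamma * z * k₁))) m :=
    (Continuous.aestronglyMeasurable (by continuity))
  have hintf : Integrable (fun z => Real.exp (-(gamma * z * k₁))) m := by
    apply Integrable.mono' (integrable_const (1:ℝ)) hmeas
    filter_upwards [hae] with z hz
    rw [Real.norm_eq_abs, abs_of_pos (Real.exp_pos _), Real.exp_le_one_iff]
    nlinarith [mul_pos (mul_pos hgamma hz) hk₁pos]
  have hIpos : 0 < I := by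
    rw [hI, integral_pos_iff_support_of_nonneg_ae
      (Filter.Eventually.of_forall fun z => (Real.exp_pos _).le) hintf]
    have : Function.support (fun z => Real.exp (-(gamma * z * k₁))) = Set.univ := by
      ext z; simp [Function.mem_support, (Real.exp_pos _).ne']
    rw [this]; simp
  have hIoi : m (Ioi 0) = 1 := by
    have h := measure_add_measure_compl (μ := m) (measurableSet_Ioi (a := (0:ℝ)))
    rw [hm, measure_univ, add_zero] at h
    exact h
  have hIlt : I < 1 := by
    have hg : Integrable (fun z => 1 - Real.exp (-(gamma * z * k₁))) m :=
      (integrable_const 1).sub hintf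
    have hnn : ∀ᵐ z ∂m, 0 ≤ 1 - Real.exp (-(gamma * z * k₁)) := by
      filter_upwards [hae] with z hz
      have : Real.exp (-(gamma * z * k₁)) ≤ 1 := by
        rw [Real.exp_le_one_iff]
        nlinarith [mul_pos (mul_pos hgamma hz) hk₁pos]
      linarith
    have hpos : 0 < ∫ z, (1 - Real.exp (-(gamma * z * k₁))) ∂m := by
      rw [integral_pos_iff_support_of_nonneg_ae hnn hg]
      refine lt_of_lt_of_le (b := m (Ioi 0)) ?_ (measure_mono ?_)
      · rw [hIoi]; norm_num
      · intro z hz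
        have : Real.exp (-(gamma * z * k₁)) < 1 := by
          rw [Real.exp_lt_one_iff]
          have := mul_pos (mul_pos hgamma (mem_Ioi.mp hz)) hk₁pos
          linarith
        simp only [Function.mem_support]
        intro h; linarith [sub_eq_zero.mp h]
    have heq : ∫ z, (1 - Real.exp (-(gamma * z * k₁))) ∂m = 1 - I := by
      rw [integral_sub (integrable_const 1) hintf]
      simp [hI]
    linarith [heq ▸ hpos]
  clear_value b I
  -- quadratic values at k₁
  have hQr : r < 1 / 2 * sigma ^ 2 * k₁ ^ 2 + b * k₁ := by nlinarith
  have hQrl : 1 / 2 * sigma ^ 2 * k₁ ^ 2 + b * k₁ < r + lam := by nlinarith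
  have hkb : 0 < k₁ + b / sigma ^ 2 := by
    have hh : 0 < sigma ^ 2 * k₁ + b := by nlinarith
    have : k₁ + b / sigma ^ 2 = (sigma ^ 2 * k₁ + b) / sigma ^ 2 := by field_simp
    rw [this]
    positivity
  have hdiv : 2 * r / sigma ^ 2 * sigma ^ 2 = 2 * r := by field_simp
  have hdiv2 : b / sigma ^ 2 * sigma ^ 2 = b := by field_simp
  have hdiv3 : 2 * (r + lam) / sigma ^ 2 * sigma ^ 2 = 2 * (r + lam) := by field_simp
  constructor
  · have h2 : Real.sqrt ((b / sigma ^ 2) ^ 2 + 2 * r / sigma ^ 2) < k₁ + b / sigma ^ 2 := by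
      rw [Real.sqrt_lt' hkb]
      have e1 : (k₁ + b / sigma ^ 2) ^ 2
          = k₁ ^ 2 + 2 * k₁ * (b / sigma ^ 2) + (b / sigma ^ 2) ^ 2 := by ring
      have key : 2 * r / sigma ^ 2 < k₁ ^ 2 + 2 * k₁ * (b / sigma ^ 2) := by
        rw [div_lt_iff₀ hσ2]
        have e2 : (k₁ ^ 2 + 2 * k₁ * (b / sigma ^ 2)) * sigma ^ 2
            = k₁ ^ 2 * sigma ^ 2 + 2 * k₁ * b := by field_simp; try ring
        rw [e2]; nlinarith [hQr]
      linarith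
    linarith
  · have h2 : k₁ + b / sigma ^ 2 <
        Real.sqrt ((b / sigma ^ 2) ^ 2 + 2 * (r + lam) / sigma ^ 2) := by
      rw [Real.lt_sqrt hkb.le]
      have e1 : (k₁ + b / sigma ^ 2) ^ 2
          = k₁ ^ 2 + 2 * k₁ * (b / sigma ^ 2) + (b / sigma ^ 2) ^ 2 := by ring
      have key : k₁ ^ 2 + 2 * k₁ * (b / sigma ^ 2) < 2 * (r + lam) / sigma ^ 2 := by
        rw [lt_div_iff₀ hσ2]
        have e2 : (k₁ ^ 2 + 2 * k₁ * (b / sigma ^ 2)) * sigma ^ 2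
            = k₁ ^ 2 * sigma ^ 2 + 2 * k₁ * b := by field_simp; try ring
        rw [e2]; nlinarith [hQrl]
      linarith
    linarith
end

section
/- Define the jump-risk adjusted discount rate θ* = r + λ∫₀^∞ (1 − e^{−γzk₁}) 𝔪(dz). Then (1/2)σ²k₁² + (μ + γλm̄)k₁ − θ* = 0, i.e. k₁ is the positive root of the characteristic equation of the associated continuous diffusion discounted at rate θ*; moreover, if λ > 0 then θ* ∈ (r, r+λ). -/
open Set MeasureTheory

/-- Jump-risk adjusted discount rate (arithmetic case of Corollary 4.2):
with `θ* = r + λ∫(1 − e^{−γzk₁})𝔪(dz)` one has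
`(1/2)σ²k₁² + (μ+γλm̄)k₁ − θ* = 0`, and if `λ > 0` then `θ* ∈ (r, r+λ)`. -/
theorem arithmetic_jump_risk_adjusted_rate
    (sigma gamma mu lam r : ℝ)
    (hsigma : 0 < sigma) (hgamma : 0 < gamma) (hlam : 0 ≤ lam) (hr : 0 < r)
    (m : Measure ℝ) [IsProbabilityMeasure m]
    (hm : m (Ioi 0)ᶜ = 0)
    (hint : Integrable (fun z => z) m)
    (mbar : ℝ) (hmbar : mbar = ∫ z, z ∂m)
    (k₁ : ℝ) (hk₁pos : 0 < k₁)
    (hk₁root : 1 / 2 * sigma ^ 2 * k₁ ^ 2 + (mu + gamma * lam * mbar) * k₁ +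
      lam * ∫ z, Real.exp (-(gamma * z * k₁)) ∂m - (r + lam) = 0) :
    1 / 2 * sigma ^ 2 * k₁ ^ 2 + (mu + gamma * lam * mbar) * k₁ -
      (r + lam * ∫ z, (1 - Real.exp (-(gamma * z * k₁))) ∂m) = 0 ∧
    (0 < lam →
      (r + lam * ∫ z, (1 - Real.exp (-(gamma * z * k₁))) ∂m) ∈ Ioo r (r + lam)) := by
  have hae : ∀ᵐ z ∂m, z ∈ Ioi (0 : ℝ) := by
    rw [MeasureTheory.ae_iff]
    have h2 : m (Iic 0) = 0 := by simpa using hm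
    simp
    exact h2
  have hmeas : AEStronglyMeasurable (fun z => Real.exp (-(gamma * z * k₁))) m :=
    (Real.continuous_exp.comp (by continuity)).aestronglyMeasurable
  have hintE : Integrable (fun z => Real.exp (-(gamma * z * k₁))) m := by
    refine Integrable.mono' (integrable_const 1) hmeas ?_
    filter_upwards [hae] with z hz
    rw [Real.norm_eq_abs, abs_of_pos (Real.exp_pos _)]
    exact Real.exp_le_one_iff.mpr (by nlinarith [mul_pos (mul_pos hgamma hz.out) hk₁pos])
  have hsplit : ∫ z, (1 - Real.exp (-(gamma * z * k₁))) ∂m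
      = 1 - ∫ z, Real.exp (-(gamma * z * k₁)) ∂m := by
    rw [integral_sub (integrable_const 1) hintE]
    simp
  constructor
  · rw [hsplit]; ring_nf; ring_nf at hk₁root; linarith
  · intro hl
    have hIpos : 0 < ∫ z, (1 - Real.exp (-(gamma * z * k₁))) ∂m := by
      rw [integral_pos_iff_support_of_nonneg_ae]
      · refine lt_of_lt_of_le (b := m (Ioi 0)) ?_ (measure_mono ?_)
        · have : m (Ioi 0) = 1 := by
            have := measure_add_measure_compl (μ := m) (s := Ioi 0) measurableSet_Ioi
            rw [hm, add_zero] at this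
            simpa using this
          simp [this]
        · intro z hz
          have : 0 < 1 - Real.exp (-(gamma * z * k₁)) := by
            have : Real.exp (-(gamma * z * k₁)) < 1 :=
              Real.exp_lt_one_iff.mpr (by nlinarith [mul_pos (mul_pos hgamma hz.out) hk₁pos])
            linarith
          exact fun h => by simp [Function.mem_support] at h; linarith [h, this]
      · filter_upwards [hae] with z hz
        have : Real.exp (-(gamma * z * k₁)) ≤ 1 :=
          Real.exp_le_one_iff.mpr (by nlinarith [mul_pos (mul_pos hgamma hz.out) hk₁pos])
        simp only [Pi.zero_apply]; linarith
      · exact (integrable_const 1).sub hintE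
    have hIlt : ∫ z, (1 - Real.exp (-(gamma * z * k₁))) ∂m < 1 := by
      rw [hsplit]
      have : 0 < ∫ z, Real.exp (-(gamma * z * k₁)) ∂m := by
        rw [integral_pos_iff_support_of_nonneg_ae]
        · have : Function.support (fun z => Real.exp (-(gamma * z * k₁))) = univ := by
            ext z; simp [Function.mem_support, (Real.exp_pos _).ne']
          simp [this]
        · filter_upwards with z using (Real.exp_pos _).le
        · exact hintE
      linarith
    constructor
    · nlinarith
    · nlinarith
end

section
/- The unique positive root k₁ = k₁(σ) of F is strictly decreasing in the volatility: if 0 < σ < σ̂ (with μ, γ, λ, r, 𝔪 fixed) then k₁(σ̂) < k₁(σ). -/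
open Set MeasureTheory

/-- The unique positive root `k₁(σ)` of the arithmetic characteristic equation is
strictly decreasing in the volatility `σ` (Theorem 5.1 of the paper, arithmetic
case). -/
theorem arithmetic_root_decreasing_in_volatility
    (gamma mu lam r : ℝ)
    (hgamma : 0 < gamma) (hlam : 0 ≤ lam) (hr : 0 < r)
    (m : Measure ℝ) [IsProbabilityMeasure m]
    (hm : m (Ioi 0)ᶜ = 0)
    (hint : Integrable (fun z => z) m)
    (mbar : ℝ) (hmbar : mbar = ∫ z, z ∂m)
    (k₁ : ℝ → ℝ)
    (hk₁ : ∀ s : ℝ, 0 < s → 0 < k₁ s ∧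
      1 / 2 * s ^ 2 * k₁ s ^ 2 + (mu + gamma * lam * mbar) * k₁ s +
        lam * ∫ z, Real.exp (-(gamma * z * k₁ s)) ∂m - (r + lam) = 0) :
    ∀ s shat : ℝ, 0 < s → s < shat → k₁ shat < k₁ s := by
  intro s shat hs hss
  obtain ⟨ha, hFa⟩ := hk₁ s hs
  obtain ⟨hb, hFb⟩ := hk₁ shat (hs.trans hss)
  set a := k₁ s with hadef
  set b := k₁ shat with hbdef
  -- a.e. positivity of z
  have hae : ∀ᵐ z ∂m, 0 < z := by
    rw [ae_iff]
    convert hm using 2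
    ext z
    simp
  -- integrability of the exponential integrand for nonneg k
  have hint_exp : ∀ k : ℝ, 0 ≤ k →
      Integrable (fun z => Real.exp (-(gamma * z * k))) m := by
    intro k hk
    apply Integrable.mono' (integrable_const (1 : ℝ))
    · exact (Real.continuous_exp.comp (by continuity)).aestronglyMeasurable
    · filter_upwards [hae] with z hz
      rw [Real.norm_eq_abs, abs_of_pos (Real.exp_pos _)]
      have : -(gamma * z * k) ≤ 0 := by
        have : 0 ≤ gamma * z * k := by positivity
        linarith
      calc Real.exp (-(gamma * z * k)) ≤ Real.exp 0 := Real.exp_le_exp.2 this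
        _ = 1 := Real.exp_zero
  set Ia := ∫ z, Real.exp (-(gamma * z * a)) ∂m with hIa
  set Ib := ∫ z, Real.exp (-(gamma * z * b)) ∂m with hIb
  -- F_s(b) < 0
  have hC : 1 / 2 * s ^ 2 * b ^ 2 + (mu + gamma * lam * mbar) * b +
      lam * Ib - (r + lam) < 0 := by
    have h2 : s ^ 2 < shat ^ 2 := by nlinarith
    have h1 := mul_lt_mul_of_pos_right h2 (by positivity : (0:ℝ) < b ^ 2)
    linarith [hFb]
  by_contra h
  push_neg at h
  rcases eq_or_lt_of_le h with heq | hlt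
  · have hII : Ia = Ib := by rw [hIa, hIb, heq]
    rw [hII] at hFa
    rw [heq] at hFa
    linarith
  · -- a < b, convexity argument with t = a/b
    set t := a / b with htdef
    have hbne : b ≠ 0 := ne_of_gt hb
    have hab : a = t * b := (div_mul_cancel₀ a hbne).symm
    have ht0 : 0 < t := div_pos ha hb
    have ht1 : t < 1 := (div_lt_one hb).2 hlt
    -- convexity inequality for the integral
    have key : Ia ≤ (1 - t) * 1 + t * Ib := by
      have hintb := hint_exp b hb.le
      have hrhs : Integrable
          (fun z => (1 - t) * 1 + t * Real.exp (-(gamma * z * b))) m :=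
        (integrable_const _).add (hintb.const_mul t)
      have hmono : Ia ≤ ∫ z, ((1 - t) * 1 + t * Real.exp (-(gamma * z * b))) ∂m := by
        apply integral_mono (hint_exp a ha.le) hrhs
        intro z
        have hcx := convexOn_exp.2 (mem_univ (0 : ℝ)) (mem_univ (-(gamma * z * b)))
          (by linarith : (0:ℝ) ≤ 1 - t) ht0.le (by ring)
        simp only [smul_eq_mul, mul_zero, zero_add, Real.exp_zero, mul_one] at hcx
        have harg : -(gamma * z * a) = (1 - t) * 0 + t * -(gamma * z * b) := by
          rw [hab]; ring
        calc Real.exp (-(gamma * z * a))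
            = Real.exp ((1 - t) * 0 + t * -(gamma * z * b)) := by rw [harg]
          _ ≤ (1 - t) * Real.exp 0 + t * Real.exp (-(gamma * z * b)) := by
              simpa using hcx
          _ = (1 - t) * 1 + t * Real.exp (-(gamma * z * b)) := by
              rw [Real.exp_zero]
      have hsplit : ∫ z, ((1 - t) * 1 + t * Real.exp (-(gamma * z * b))) ∂m
          = (1 - t) * 1 + t * Ib := by
        rw [integral_add (integrable_const _) (hintb.const_mul t),
          integral_const, integral_const_mul]
        simp [hIb]
      rw [hsplit] at hmono
      exact hmono
    -- combine everything
    have hsb2 : 0 < s ^ 2 * b ^ 2 := by positivity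
    rw [hab] at hFa
    nlinarith [hFa, key, mul_neg_of_pos_of_neg ht0 hC,
      mul_le_mul_of_nonneg_left key hlam,
      mul_pos (mul_pos ht0 (sub_pos.2 ht1)) hsb2,
      mul_pos (sub_pos.2 ht1) hr]
end

section
/- The unique positive root k₁ = k₁(λ) of F_λ is strictly decreasing in the jump intensity: if 0 ≤ λ < λ̂ (with σ, γ, μ, r, 𝔪 fixed) then k₁(λ̂) < k₁(λ). -/
open Set MeasureTheory

set_option maxHeartbeats 1600000 in
/-- The unique positive root `k₁(λ)` of the arithmetic characteristic equation is
strictly decreasing in the jump intensity `λ` (Theorem 5.2 of the paper,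
arithmetic case). -/
theorem arithmetic_root_decreasing_in_intensity
    (sigma gamma mu r : ℝ)
    (hsigma : 0 < sigma) (hgamma : 0 < gamma) (hr : 0 < r)
    (m : Measure ℝ) [IsProbabilityMeasure m]
    (hm : m (Ioi 0)ᶜ = 0)
    (hint : Integrable (fun z => z) m)
    (mbar : ℝ) (hmbar : mbar = ∫ z, z ∂m)
    (k₁ : ℝ → ℝ)
    (hk₁ : ∀ l : ℝ, 0 ≤ l → 0 < k₁ l ∧
      1 / 2 * sigma ^ 2 * k₁ l ^ 2 + (mu + gamma * l * mbar) * k₁ l +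
        l * ∫ z, Real.exp (-(gamma * z * k₁ l)) ∂m - (r + l) = 0) :
    ∀ l lhat : ℝ, 0 ≤ l → l < lhat → k₁ lhat < k₁ l := by
  intro l lhat hl hll
  have hlhat0 : (0:ℝ) ≤ lhat := hl.trans hll.le
  obtain ⟨hkpos, hkeq⟩ := hk₁ l hl
  obtain ⟨hKpos, hKeq⟩ := hk₁ lhat hlhat0
  by_contra hcon
  push_neg at hcon
  set k := k₁ l with hkdef
  set K := k₁ lhat with hKdef
  -- almost every point is positive
  have hae : ∀ᵐ z ∂m, 0 < z := by
    rw [ae_iff]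
    have hset : {z : ℝ | ¬ 0 < z} = (Ioi 0)ᶜ := by ext z; simp
    rw [hset]; exact hm
  -- integrability of the exponential integrand
  have hintexp : ∀ kk : ℝ, 0 < kk →
      Integrable (fun z => Real.exp (-(gamma * z * kk))) m := by
    intro kk hkk
    refine Integrable.mono' (integrable_const 1) ?_ ?_
    · exact (Real.continuous_exp.comp
        (((continuous_const.mul continuous_id).mul continuous_const).neg)).aestronglyMeasurable
    · filter_upwards [hae] with z hz
      rw [Real.norm_eq_abs, abs_of_pos (Real.exp_pos _), Real.exp_le_one_iff]
      nlinarith [mul_pos (mul_pos hgamma hz) hkk]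
  have hIoi : m (Ioi (0:ℝ)) = 1 := by
    have h := measure_add_measure_compl (μ := m) (measurableSet_Ioi : MeasurableSet (Ioi (0:ℝ)))
    rw [hm, add_zero, measure_univ] at h
    exact h
  -- Lemma A : strict Jensen-type bound  1 - γ m̄ kk < ∫ e^{-γ z kk}
  have lemA : ∀ kk : ℝ, 0 < kk →
      1 - gamma * mbar * kk < ∫ z, Real.exp (-(gamma * z * kk)) ∂m := by
    intro kk hkk
    set h : ℝ → ℝ := fun z => Real.exp (-(gamma * z * kk)) + gamma * kk * z - 1 with hh_def
    have hadd : Integrable (fun z => Real.exp (-(gamma * z * kk)) + gamma * kk * z) m :=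
      (hintexp kk hkk).add (hint.const_mul (gamma * kk))
    have hh : Integrable h m := hadd.sub (integrable_const 1)
    have hnn : ∀ z, 0 ≤ h z := by
      intro z
      have := Real.add_one_le_exp (-(gamma * z * kk))
      simp only [hh_def]
      nlinarith
    have hsub : Ioi (0:ℝ) ⊆ Function.support h := by
      intro z hz
      have hx : -(gamma * z * kk) ≠ 0 := by
        have : 0 < gamma * z * kk := mul_pos (mul_pos hgamma hz) hkk
        linarith
      have := Real.add_one_lt_exp hx
      simp only [Function.mem_support, hh_def]
      intro h0
      nlinarith
    have hsupp : 0 < m (Function.support h) := by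
      refine lt_of_lt_of_le ?_ (measure_mono hsub)
      rw [hIoi]; exact zero_lt_one
    have hposint : 0 < ∫ z, h z ∂m :=
      (integral_pos_iff_support_of_nonneg_ae (Filter.Eventually.of_forall hnn) hh).2 hsupp
    have hsplit : ∫ z, h z ∂m =
        (∫ z, Real.exp (-(gamma * z * kk)) ∂m) + gamma * kk * (∫ z, z ∂m) - 1 := by
      simp only [hh_def]
      rw [integral_sub hadd (integrable_const 1),
        integral_add (hintexp kk hkk) (hint.const_mul (gamma * kk)),
        integral_const_mul, integral_const]
      simp [measure_univ]
    rw [hsplit, ← hmbar] at hposint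
    nlinarith
  -- Lemma B : convexity bound
  have lemB : ∀ Kk t : ℝ, 0 < Kk → 0 < t → t ≤ 1 →
      (∫ z, Real.exp (-(gamma * z * (t * Kk))) ∂m) ≤
        (1 - t) + t * ∫ z, Real.exp (-(gamma * z * Kk)) ∂m := by
    intro Kk t hKk ht ht1
    have hpt : ∀ z, Real.exp (-(gamma * z * (t * Kk))) ≤
        (1 - t) + t * Real.exp (-(gamma * z * Kk)) := by
      intro z
      have h := convexOn_exp.2 (Set.mem_univ (0:ℝ)) (Set.mem_univ (-(gamma * z * Kk)))
        (by linarith : (0:ℝ) ≤ 1 - t) ht.le (by ring)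
      simp only [smul_eq_mul, mul_zero, zero_add, Real.exp_zero, mul_one] at h
      rw [show t * -(gamma * z * Kk) = -(gamma * z * (t * Kk)) by ring] at h
      linarith
    have hR : Integrable (fun z => (1 - t) + t * Real.exp (-(gamma * z * Kk))) m :=
      (integrable_const (1 - t)).add ((hintexp Kk hKk).const_mul t)
    calc (∫ z, Real.exp (-(gamma * z * (t * Kk))) ∂m)
        ≤ ∫ z, ((1 - t) + t * Real.exp (-(gamma * z * Kk))) ∂m :=
          integral_mono (hintexp (t * Kk) (mul_pos ht hKk)) hR (fun z => hpt z)
      _ = (1 - t) + t * ∫ z, Real.exp (-(gamma * z * Kk)) ∂m := by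
          rw [integral_add (integrable_const (1 - t)) ((hintexp Kk hKk).const_mul t),
            integral_const_mul, integral_const]
          simp [measure_univ]
  -- the main argument
  set t : ℝ := k / K with htdef
  have ht : 0 < t := div_pos hkpos hKpos
  have ht1 : t ≤ 1 := (div_le_one hKpos).2 hcon
  have e1 : k = t * K := (div_mul_cancel₀ k (ne_of_gt hKpos)).symm
  clear_value t k K
  -- F(λ̂, k) > 0
  have hP : 0 < (lhat - l) * (gamma * mbar * k + (∫ z, Real.exp (-(gamma * z * k)) ∂m) - 1) :=
    mul_pos (sub_pos.2 hll) (by have := lemA k hkpos; linarith)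
  have h1 : 0 < 1 / 2 * sigma ^ 2 * k ^ 2 + (mu + gamma * lhat * mbar) * k +
      lhat * (∫ z, Real.exp (-(gamma * z * k)) ∂m) - (r + lhat) := by
    set Jk := ∫ z, Real.exp (-(gamma * z * k)) ∂m with hJk
    linarith [hP, hkeq]
  -- F(λ̂, k) ≤ -(1-t) r
  have h2 : 1 / 2 * sigma ^ 2 * k ^ 2 + (mu + gamma * lhat * mbar) * k +
      lhat * (∫ z, Real.exp (-(gamma * z * k)) ∂m) - (r + lhat) ≤ -((1 - t) * r) := by
    rw [e1]
    have hB := lemB K t hKpos ht ht1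
    have hBl := mul_le_mul_of_nonneg_left hB hlhat0
    have hq : (t * K) ^ 2 ≤ t * K ^ 2 := by nlinarith [sq_nonneg K]
    have hq' := mul_le_mul_of_nonneg_left hq
      (le_of_lt (by positivity : (0:ℝ) < 1 / 2 * sigma ^ 2))
    have hKt : t * (1 / 2 * sigma ^ 2 * K ^ 2 + (mu + gamma * lhat * mbar) * K +
        lhat * (∫ z, Real.exp (-(gamma * z * K)) ∂m) - (r + lhat)) = 0 := by
      rw [hKeq, mul_zero]
    set J2 := ∫ z, Real.exp (-(gamma * z * (t * K))) ∂m with hJ2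
    set JK := ∫ z, Real.exp (-(gamma * z * K)) ∂m with hJK
    clear_value J2 JK
    clear hJ2 hJK hB hq lemA lemB hintexp hae hm hint hk₁ hkeq hKeq hP h1 e1 hmbar
    linarith [hBl, hq', hKt]
  have hrt : 0 ≤ (1 - t) * r := mul_nonneg (by linarith) hr.le
  linarith
end

section
/- The point x* = min(I + 1/k, K) is the unique global maximizer over ℝ of h(x) = e^{−kx}·max(min(K,x) − I, 0); moreover h is nondecreasing on (−∞, x*] and strictly decreasing on [x*, ∞). In particular x* = I + 1/k if k ≥ 1/(K−I) and x* = K if k < 1/(K−I), and consequently for every x ∈ ℝ, sup_{y ≥ x} e^{−ky}·max(min(K,y) − I, 0) equals e^{−kx*}(x* − I) when x < x* and equals e^{−kx}·max(min(K,x) − I, 0) when x ≥ x*. -/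
open Set

private lemma capped_deriv_aux (k I : ℝ) (y : ℝ) :
    HasDerivAt (fun y => (y - I) * Real.exp (-(k * y)))
      ((1 - k * (y - I)) * Real.exp (-(k * y))) y := by
  have h1 : HasDerivAt (fun y : ℝ => -(k * y)) (-k) y := by
    have h := ((hasDerivAt_id y).const_mul k).neg; rw [mul_one] at h; exact h
  have h2 := h1.exp
  have h3 : HasDerivAt (fun y : ℝ => y - I) 1 y := (hasDerivAt_id y).sub_const I
  have := h3.mul h2
  refine this.congr_deriv ?_
  ring

private lemma capped_cont (k I : ℝ) :
    Continuous (fun y : ℝ => (y - I) * Real.exp (-(k * y))) :=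
  (continuous_id.sub continuous_const).mul
    ((continuous_const.mul continuous_id).neg.rexp)

private lemma capped_mono (k I : ℝ) (hk : 0 < k) :
    StrictMonoOn (fun y : ℝ => (y - I) * Real.exp (-(k * y))) (Iic (I + 1 / k)) := by
  apply strictMonoOn_of_deriv_pos (convex_Iic _) (capped_cont k I).continuousOn
  intro y hy
  rw [interior_Iic] at hy
  rw [(capped_deriv_aux k I y).deriv]
  have hy' : y < I + 1 / k := hy
  have h1 : k * (y - I) < 1 := by
    have : y - I < 1 / k := by linarith
    calc k * (y - I) < k * (1 / k) := by
          exact mul_lt_mul_of_pos_left this hk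
      _ = 1 := by field_simp
  exact mul_pos (by linarith) (Real.exp_pos _)

private lemma capped_anti (k I : ℝ) (hk : 0 < k) :
    StrictAntiOn (fun y : ℝ => (y - I) * Real.exp (-(k * y))) (Ici (I + 1 / k)) := by
  apply strictAntiOn_of_deriv_neg (convex_Ici _) (capped_cont k I).continuousOn
  intro y hy
  rw [interior_Ici] at hy
  rw [(capped_deriv_aux k I y).deriv]
  have hy' : I + 1 / k < y := hy
  have h1 : 1 < k * (y - I) := by
    have : 1 / k < y - I := by linarith
    calc (1 : ℝ) = k * (1 / k) := by field_simp
      _ < k * (y - I) := by exact mul_lt_mul_of_pos_left this hk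
  exact mul_neg_of_neg_of_pos (by linarith) (Real.exp_pos _)

/-- Capped option reward (Section 7.1 of the paper): for `k > 0` and `K > I > 0`,
the point `x* = min(I + 1/k, K)` is the unique global maximizer of
`h(x) = e^{−kx}·(min(K,x) − I)⁺`; `h` is nondecreasing on `(−∞,x*]` and strictly
decreasing on `[x*,∞)`; `x* = I + 1/k` iff `k ≥ 1/(K−I)` and `x* = K` otherwise;
and for every `x`, `sup_{y ≥ x} h(y)` equals `e^{−kx*}(x*−I)` if `x < x*` and
`h(x)` if `x ≥ x*`. -/
theorem capped_option_threshold
    (k K I : ℝ) (hk : 0 < k) (hKI : I < K) (hI : 0 < I)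
    (h : ℝ → ℝ)
    (hdef : ∀ y : ℝ, h y = Real.exp (-(k * y)) * max (min K y - I) 0)
    (xstar : ℝ) (hxstar : xstar = min (I + 1 / k) K) :
    (∀ y : ℝ, y ≠ xstar → h y < h xstar) ∧
    MonotoneOn h (Iic xstar) ∧
    StrictAntiOn h (Ici xstar) ∧
    (1 / (K - I) ≤ k → xstar = I + 1 / k) ∧
    (k < 1 / (K - I) → xstar = K) ∧
    (∀ x : ℝ, x < xstar →
      IsGreatest (h '' Ici x) (Real.exp (-(k * xstar)) * (xstar - I))) ∧
    (∀ x : ℝ, xstar ≤ x → IsGreatest (h '' Ici x) (h x)) := by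
  set f : ℝ → ℝ := fun y : ℝ => (y - I) * Real.exp (-(k * y)) with hf
  have hM : StrictMonoOn f (Iic (I + 1 / k)) := capped_mono k I hk
  have hA : StrictAntiOn f (Ici (I + 1 / k)) := capped_anti k I hk
  have hk' : 0 < 1 / k := by positivity
  have hIc : I < I + 1 / k := by linarith
  have hIx : I < xstar := by rw [hxstar]; exact lt_min hIc hKI
  have hxc : xstar ≤ I + 1 / k := by rw [hxstar]; exact min_le_left _ _
  have hxK : xstar ≤ K := by rw [hxstar]; exact min_le_right _ _
  -- basic formulas for h
  have hfh : ∀ y : ℝ, I ≤ y → y ≤ K → h y = f y := by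
    intro y h1 h2
    rw [hdef, min_eq_right h2, max_eq_left (by linarith), hf]
    ring
  have hgK : ∀ y : ℝ, K ≤ y → h y = (K - I) * Real.exp (-(k * y)) := by
    intro y hy
    rw [hdef, min_eq_left hy, max_eq_left (by linarith)]
    ring
  have h0 : ∀ y : ℝ, y ≤ I → h y = 0 := by
    intro y hy
    have h1 : min K y - I ≤ 0 := by
      have := min_le_right K y; linarith
    rw [hdef, max_eq_right h1, mul_zero]
  have hgs : ∀ a b : ℝ, a < b →
      (K - I) * Real.exp (-(k * b)) < (K - I) * Real.exp (-(k * a)) := by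
    intro a b hab
    apply mul_lt_mul_of_pos_left _ (by linarith : (0:ℝ) < K - I)
    exact Real.exp_lt_exp.mpr (by nlinarith)
  have hfx : 0 < f xstar := mul_pos (by linarith) (Real.exp_pos _)
  have hxeq : xstar < K → xstar = I + 1 / k := by
    intro h1
    have h2 : I + 1 / k < K := by
      rcases min_lt_iff.mp (hxstar ▸ h1) with h | h
      · exact h
      · exact absurd h (lt_irrefl K)
    rw [hxstar]; exact min_eq_left h2.le
  have hfKx : f K ≤ f xstar := by
    rcases eq_or_lt_of_le hxK with he | hlt
    · rw [he]
    · have hx' : xstar = I + 1 / k := hxeq hlt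
      exact (hA (by rw [hx']; exact self_mem_Ici : xstar ∈ Ici (I + 1 / k))
        (mem_Ici.mpr (by linarith [hx' ▸ hlt])) hlt).le
  have hhx : h xstar = f xstar := hfh xstar hIx.le hxK
  have hfKeq : f K = (K - I) * Real.exp (-(k * K)) := by rw [hf]
  -- global strict maximum
  have hmax : ∀ y : ℝ, y ≠ xstar → h y < h xstar := by
    intro y hy
    rcases le_or_gt y I with h1 | h1
    · rw [h0 y h1, hhx]; exact hfx
    rcases le_or_gt y K with h2 | h2
    · rw [hfh y h1.le h2, hhx]
      rcases lt_or_gt_of_ne hy with h3 | h3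
      · exact hM (mem_Iic.mpr (by linarith)) (mem_Iic.mpr hxc) h3
      · have hx' : xstar = I + 1 / k := hxeq (lt_of_lt_of_le h3 h2)
        exact hA (by rw [hx']; exact self_mem_Ici : xstar ∈ Ici (I + 1 / k))
          (mem_Ici.mpr (by rw [← hx']; linarith)) h3
    · rw [hgK y h2.le, hhx]
      calc (K - I) * Real.exp (-(k * y)) < (K - I) * Real.exp (-(k * K)) := hgs K y h2
        _ = f K := hfKeq.symm
        _ ≤ f xstar := hfKx
  -- monotone on Iic xstar
  have hmono : MonotoneOn h (Iic xstar) := by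
    intro a ha b hb hab
    have hbx : b ≤ xstar := hb
    rcases le_or_gt b I with h1 | h1
    · rw [h0 a (le_trans hab h1), h0 b h1]
    · rw [hfh b h1.le (le_trans hbx hxK)]
      rcases le_or_gt a I with h2 | h2
      · rw [h0 a h2]
        exact mul_nonneg (by linarith) (Real.exp_pos _).le
      · rw [hfh a h2.le (le_trans (le_trans hab hbx) hxK)]
        exact hM.monotoneOn (mem_Iic.mpr (by linarith)) (mem_Iic.mpr (by linarith)) hab
  -- strictly anti on Ici xstar
  have hanti : StrictAntiOn h (Ici xstar) := by
    intro a ha b hb hab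
    have hax : xstar ≤ a := ha
    have hIa : I < a := lt_of_lt_of_le hIx hax
    rcases le_or_gt b K with h1 | h1
    · have hx' : xstar = I + 1 / k := hxeq (lt_of_le_of_lt hax (lt_of_lt_of_le hab h1))
      rw [hfh a hIa.le (by linarith), hfh b (by linarith) h1]
      exact hA (mem_Ici.mpr (by rw [← hx']; exact hax))
        (mem_Ici.mpr (by rw [← hx']; linarith)) hab
    · rcases le_or_gt K a with h2 | h2
      · rw [hgK a h2, hgK b h1.le]
        exact hgs a b hab
      · have hx' : xstar = I + 1 / k := hxeq (lt_of_le_of_lt hax h2)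
        rw [hfh a hIa.le h2.le, hgK b h1.le]
        have e1 : (K - I) * Real.exp (-(k * b)) < (K - I) * Real.exp (-(k * K)) :=
          hgs K b h1
        have e2 : f K < f a :=
          hA (mem_Ici.mpr (by rw [← hx']; exact hax)) (mem_Ici.mpr (by rw [← hx']; linarith)) h2
        linarith [hfKeq]
  refine ⟨hmax, hmono, hanti, ?_, ?_, ?_, ?_⟩
  · intro hle
    have hKI' : 0 < K - I := by linarith
    have h1 : 1 ≤ k * (K - I) := by
      have := (div_le_iff₀ hKI').mp hle
      linarith
    have h2 : 1 / k ≤ K - I := by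
      rw [div_le_iff₀ hk]; linarith
    rw [hxstar]; exact min_eq_left (by linarith)
  · intro hlt
    have hKI' : 0 < K - I := by linarith
    have h1 : k * (K - I) < 1 := by
      have := (lt_div_iff₀ hKI').mp hlt
      linarith
    have h2 : K - I < 1 / k := by
      rw [lt_div_iff₀ hk]; linarith
    rw [hxstar]; exact min_eq_right (by linarith)
  · intro x hx
    have hval : h xstar = Real.exp (-(k * xstar)) * (xstar - I) := by
      rw [hhx, hf]; ring
    constructor
    · exact ⟨xstar, mem_Ici.mpr hx.le, hval⟩
    · rintro z ⟨y, _, rfl⟩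
      rw [← hval]
      rcases eq_or_ne y xstar with rfl | hne
      · exact le_rfl
      · exact (hmax y hne).le
  · intro x hx
    constructor
    · exact ⟨x, self_mem_Ici, rfl⟩
    · rintro z ⟨y, hy, rfl⟩
      rcases eq_or_lt_of_le (mem_Ici.mp hy) with rfl | hlt
      · exact le_rfl
      · exact (hanti (mem_Ici.mpr hx) (mem_Ici.mpr (le_trans hx hlt.le)) hlt).le
end

section
/- The function F is convex on [0,∞), F(0) = −r < 0, F(1) = α − r, F(k) → +∞ as k → ∞, and there exists a unique k₁ > 0 with F(k₁) = 0; moreover k₁ > 1 if α < r, k₁ = 1 if α = r, and k₁ < 1 if α > r. -/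
open Set MeasureTheory Filter

/-- Properties of the geometric characteristic function
`F(k) = (1/2)σ²k(k−1) + (α+λm̄)k − (r+λ) + λ∫(1−z)^k 𝔪(dz)`:
`F` is convex on `[0,∞)`, `F(0) = −r < 0`, `F(1) = α − r`, `F(k) → +∞` as
`k → ∞`, there is a unique positive root `k₁`, and `k₁ > 1` if `α < r`,
`k₁ = 1` if `α = r`, `k₁ < 1` if `α > r`. -/
theorem geometric_characteristic_root
    (sigma alpha lam r : ℝ)
    (hsigma : 0 < sigma) (hlam : 0 ≤ lam) (hr : 0 < r)
    (m : Measure ℝ) [IsProbabilityMeasure m]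
    (hm : m (Ioo 0 1)ᶜ = 0)
    (hint : Integrable (fun z => z) m)
    (mbar : ℝ) (hmbar : mbar = ∫ z, z ∂m) :
    ConvexOn ℝ (Ici 0)
      (fun k => 1 / 2 * sigma ^ 2 * k * (k - 1) + (alpha + lam * mbar) * k -
        (r + lam) + lam * ∫ z, (1 - z) ^ k ∂m) ∧
    (1 / 2 * sigma ^ 2 * (0 : ℝ) * ((0 : ℝ) - 1) + (alpha + lam * mbar) * 0 -
        (r + lam) + lam * ∫ z, (1 - z) ^ (0 : ℝ) ∂m) = -r ∧
    (-r : ℝ) < 0 ∧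
    (1 / 2 * sigma ^ 2 * (1 : ℝ) * ((1 : ℝ) - 1) + (alpha + lam * mbar) * 1 -
        (r + lam) + lam * ∫ z, (1 - z) ^ (1 : ℝ) ∂m) = alpha - r ∧
    Tendsto
      (fun k => 1 / 2 * sigma ^ 2 * k * (k - 1) + (alpha + lam * mbar) * k -
        (r + lam) + lam * ∫ z, (1 - z) ^ k ∂m) atTop atTop ∧
    (∃! k₁ : ℝ, 0 < k₁ ∧
      1 / 2 * sigma ^ 2 * k₁ * (k₁ - 1) + (alpha + lam * mbar) * k₁ -
        (r + lam) + lam * ∫ z, (1 - z) ^ k₁ ∂m = 0) ∧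
    (∀ k₁ : ℝ, 0 < k₁ →
      1 / 2 * sigma ^ 2 * k₁ * (k₁ - 1) + (alpha + lam * mbar) * k₁ -
        (r + lam) + lam * ∫ z, (1 - z) ^ k₁ ∂m = 0 →
      (alpha < r → 1 < k₁) ∧ (alpha = r → k₁ = 1) ∧ (r < alpha → k₁ < 1)) := by
  obtain ⟨F, hF⟩ : ∃ F : ℝ → ℝ, ∀ k : ℝ, F k =
      1 / 2 * sigma ^ 2 * k * (k - 1) + (alpha + lam * mbar) * k -
        (r + lam) + lam * ∫ z, (1 - z) ^ k ∂m := ⟨_, fun _ => rfl⟩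
  -- a.e. membership
  have hae : ∀ᵐ z ∂m, z ∈ Ioo (0:ℝ) 1 := by
    rw [ae_iff]
    exact hm
  -- measurability
  have hmeas : ∀ k : ℝ, 0 ≤ k → AEStronglyMeasurable (fun z : ℝ => (1 - z) ^ k) m := by
    intro k hk
    exact ((Real.continuous_rpow_const hk).comp
      (continuous_const.sub continuous_id)).aestronglyMeasurable
  -- integrability with bound 1
  have hbd : ∀ k : ℝ, 0 ≤ k → ∀ᵐ z ∂m, ‖(1 - z) ^ k‖ ≤ (1:ℝ) := by
    intro k hk
    filter_upwards [hae] with z hz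
    rw [Real.norm_eq_abs, abs_of_nonneg (Real.rpow_nonneg (by linarith [hz.2]) _)]
    exact Real.rpow_le_one (by linarith [hz.2]) (by linarith [hz.1]) hk
  have hint1 : ∀ k : ℝ, 0 ≤ k → Integrable (fun z : ℝ => (1 - z) ^ k) m := by
    intro k hk
    exact (integrable_const (1:ℝ)).mono' (hmeas k hk) (hbd k hk)
  have hGnn : ∀ k : ℝ, 0 ≤ k → 0 ≤ ∫ z, (1 - z) ^ k ∂m := by
    intro k hk
    apply integral_nonneg_of_ae
    filter_upwards [hae] with z hz
    exact Real.rpow_nonneg (by linarith [hz.2]) _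
  -- convexity of the integral part
  have hGconv : ConvexOn ℝ (Ici 0) (fun k : ℝ => ∫ z, (1 - z) ^ k ∂m) := by
    refine ⟨convex_Ici 0, fun x hx y hy a b ha hb hab => ?_⟩
    simp only [smul_eq_mul]
    have hx0 : (0:ℝ) ≤ x := hx
    have hy0 : (0:ℝ) ≤ y := hy
    have haxy : 0 ≤ a * x + b * y := by positivity
    have key : ∀ᵐ z ∂m, (1 - z) ^ (a * x + b * y) ≤ a * (1 - z) ^ x + b * (1 - z) ^ y := by
      filter_upwards [hae] with z hz
      have h1z : (0:ℝ) < 1 - z := by linarith [hz.2]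
      have e1 : (1 - z) ^ (a * x + b * y) = ((1 - z) ^ x) ^ a * ((1 - z) ^ y) ^ b := by
        rw [Real.rpow_add h1z, mul_comm a x, mul_comm b y,
          Real.rpow_mul h1z.le, Real.rpow_mul h1z.le]
      rw [e1]
      exact Real.geom_mean_le_arith_mean2_weighted ha hb (Real.rpow_nonneg h1z.le _)
        (Real.rpow_nonneg h1z.le _) hab
    calc ∫ z, (1 - z) ^ (a * x + b * y) ∂m
        ≤ ∫ z, (a * (1 - z) ^ x + b * (1 - z) ^ y) ∂m := by
          apply integral_mono_ae (hint1 _ haxy)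
            (((hint1 x hx0).const_mul a).add ((hint1 y hy0).const_mul b)) key
      _ = a * ∫ z, (1 - z) ^ x ∂m + b * ∫ z, (1 - z) ^ y ∂m := by
          rw [integral_add ((hint1 x hx0).const_mul a) ((hint1 y hy0).const_mul b),
            integral_const_mul, integral_const_mul]
  -- strict convexity of F
  have hFs : StrictConvexOn ℝ (Ici 0) F := by
    have hq : StrictConvexOn ℝ (Ici (0:ℝ)) fun x : ℝ => 1 / 2 * sigma ^ 2 * x ^ 2 := by
      refine ⟨convex_Ici 0, fun x _ y _ hxy a b ha hb hab => ?_⟩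
      simp only [smul_eq_mul]
      have hb1 : b = 1 - a := by linarith
      subst hb1
      have h1 : (0:ℝ) < (x - y) ^ 2 := sq_pos_iff.mpr (sub_ne_zero.mpr hxy)
      have h2 : (0:ℝ) < sigma ^ 2 := by positivity
      nlinarith [mul_pos (mul_pos (mul_pos ha hb) h2) h1]
    have haff : ConvexOn ℝ (Ici (0:ℝ)) fun k : ℝ =>
        (alpha + lam * mbar - 1 / 2 * sigma ^ 2) * k - (r + lam) +
          lam * ∫ z, (1 - z) ^ k ∂m := by
      have h1 : ConvexOn ℝ (Ici (0:ℝ)) fun k : ℝ =>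
          (alpha + lam * mbar - 1 / 2 * sigma ^ 2) * k - (r + lam) :=
        ⟨convex_Ici 0, fun x _ y _ a b ha hb hab => by simp only [smul_eq_mul]; nlinarith⟩
      have h2 := hGconv.smul hlam
      have h3 := h1.add h2
      simpa [smul_eq_mul, Pi.add_def] using h3
    have h4 := hq.add_convexOn haff
    have heq : ((fun x : ℝ => 1 / 2 * sigma ^ 2 * x ^ 2) + fun k : ℝ =>
        (alpha + lam * mbar - 1 / 2 * sigma ^ 2) * k - (r + lam) +
          lam * ∫ z, (1 - z) ^ k ∂m) = F := by
      funext k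
      rw [hF k]
      simp only [Pi.add_apply]
      ring
    rwa [heq] at h4
  have hFconv : ConvexOn ℝ (Ici 0) F := hFs.convexOn
  -- value at 0
  have hI0 : (∫ z, (1 - z) ^ (0:ℝ) ∂m) = 1 := by
    simp [Real.rpow_zero]
  have hF0 : F 0 = -r := by
    rw [hF 0, hI0]
    ring
  -- value at 1
  have hI1 : (∫ z, (1 - z) ^ (1:ℝ) ∂m) = 1 - mbar := by
    simp only [Real.rpow_one]
    rw [integral_sub (integrable_const 1) hint, integral_const]
    simp [hmbar]
  have hF1 : F 1 = alpha - r := by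
    rw [hF 1, hI1]
    ring
  -- tendsto atTop
  have hFtop : Tendsto F atTop atTop := by
    apply tendsto_atTop_mono' atTop
      (show ∀ᶠ k in atTop, k - (r + lam) ≤ F k from ?_)
      (tendsto_atTop_add_const_right _ (-(r + lam)) tendsto_id)
    have hσ : (0:ℝ) < 1 / 2 * sigma ^ 2 := by positivity
    filter_upwards [eventually_ge_atTop
      (max 1 ((1 - (alpha + lam * mbar) + 1 / 2 * sigma ^ 2) / (1 / 2 * sigma ^ 2)))] with k hk
    have hk1 : (1:ℝ) ≤ k := le_trans (le_max_left _ _) hk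
    have hk2 : (1 - (alpha + lam * mbar) + 1 / 2 * sigma ^ 2) / (1 / 2 * sigma ^ 2) ≤ k :=
      le_trans (le_max_right _ _) hk
    have h2 : 1 - (alpha + lam * mbar) + 1 / 2 * sigma ^ 2 ≤ 1 / 2 * sigma ^ 2 * k := by
      rw [div_le_iff₀ hσ] at hk2; linarith
    have hGk := hGnn k (by linarith)
    have hlamG : 0 ≤ lam * ∫ z, (1 - z) ^ k ∂m := mul_nonneg hlam hGk
    rw [hF k]
    have h3 : 0 ≤ k * (1 / 2 * sigma ^ 2 * (k - 1) - (1 - (alpha + lam * mbar))) :=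
      mul_nonneg (by linarith) (by linarith)
    nlinarith
  -- continuity of the integral part on Ici 0
  have hGcont : ContinuousOn (fun k : ℝ => ∫ z, (1 - z) ^ k ∂m) (Ici 0) := by
    intro k₀ hk₀
    apply continuousWithinAt_of_dominated (bound := fun _ => (1:ℝ))
    · filter_upwards [eventually_mem_nhdsWithin] with x hx
      exact hmeas x hx
    · filter_upwards [eventually_mem_nhdsWithin] with x hx
      exact hbd x hx
    · exact integrable_const 1
    · filter_upwards [hae] with z hz
      have h1z : (0:ℝ) < 1 - z := by linarith [hz.2]
      have hct : Continuous fun k : ℝ => (1 - z) ^ k := by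
        have h : Continuous fun k : ℝ => Real.exp (Real.log (1 - z) * k) := by
          fun_prop
        apply h.congr
        intro k
        rw [Real.rpow_def_of_pos h1z]
      exact hct.continuousAt.continuousWithinAt
  have hFcont : ContinuousOn F (Ici 0) := by
    have h1 : ContinuousOn (fun k : ℝ => 1 / 2 * sigma ^ 2 * k * (k - 1) +
        (alpha + lam * mbar) * k - (r + lam)) (Ici 0) := by
      apply Continuous.continuousOn
      exact (((continuous_const.mul continuous_id).mul (continuous_id.sub continuous_const)).add
        (continuous_const.mul continuous_id)).sub continuous_const
    have h2 := h1.add ((continuousOn_const (c := lam)).mul hGcont)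
    apply h2.congr
    intro k _
    rw [hF k]; rfl
  -- positivity after a root, negativity before
  have hpos : ∀ a t : ℝ, 0 < a → F a = 0 → a < t → 0 < F t := by
    intro a t ha hFa hat
    have ht : 0 < t := lt_trans ha hat
    have hθ : 0 < 1 - a / t := by
      rw [sub_pos, div_lt_one ht]; exact hat
    have hθ' : 0 < a / t := div_pos ha ht
    have hcomb := hFs.2 (self_mem_Ici) (mem_Ici.mpr ht.le) (ne_of_lt ht)
      hθ hθ' (by ring)
    simp only [smul_eq_mul, mul_zero, zero_add] at hcomb
    rw [div_mul_cancel₀ _ (ne_of_gt ht)] at hcomb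
    rw [hFa, hF0] at hcomb
    by_contra hcon
    push_neg at hcon
    nlinarith [mul_pos hθ hr, mul_nonneg hθ'.le (neg_nonneg.mpr hcon)]
  have hneg : ∀ a t : ℝ, 0 < a → F a = 0 → 0 < t → t < a → F t < 0 := by
    intro a t ha hFa ht hta
    have hθ : 0 < 1 - t / a := by
      rw [sub_pos, div_lt_one ha]; exact hta
    have hθ' : 0 < t / a := div_pos ht ha
    have hcomb := hFs.2 (self_mem_Ici) (mem_Ici.mpr ha.le) (ne_of_lt ha)
      hθ hθ' (by ring)
    simp only [smul_eq_mul, mul_zero, zero_add] at hcomb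
    rw [div_mul_cancel₀ _ (ne_of_gt ha)] at hcomb
    rw [hFa, hF0] at hcomb
    nlinarith [mul_pos hθ hr]
  -- existence of root
  have hex : ∃ k₁ : ℝ, 0 < k₁ ∧ F k₁ = 0 := by
    obtain ⟨K, hK0, hKnn⟩ := ((hFtop.eventually_gt_atTop 0).and (eventually_ge_atTop 0)).exists
    have hIVT := intermediate_value_Icc hKnn (hFcont.mono (Icc_subset_Ici_self))
    have h0mem : (0:ℝ) ∈ Icc (F 0) (F K) := by
      constructor
      · rw [hF0]; linarith
      · exact hK0.le
    obtain ⟨k₁, hk₁mem, hFk₁⟩ := hIVT h0mem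
    refine ⟨k₁, ?_, hFk₁⟩
    rcases hk₁mem.1.eq_or_lt with h | h
    · exfalso; rw [← h, hF0] at hFk₁; linarith
    · exact h
  obtain ⟨k₁, hk₁pos, hFk₁⟩ := hex
  have huniq : ∃! k : ℝ, 0 < k ∧ F k = 0 := by
    refine ⟨k₁, ⟨hk₁pos, hFk₁⟩, fun y hy => ?_⟩
    obtain ⟨hy0, hFy⟩ := hy
    rcases lt_trichotomy y k₁ with h | h | h
    · exact absurd hFy (ne_of_lt (hneg k₁ y hk₁pos hFk₁ hy0 h))
    · exact h
    · exact absurd hFy (ne_of_gt (hpos k₁ y hk₁pos hFk₁ h))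
  -- comparisons
  have hcomp : ∀ k : ℝ, 0 < k → F k = 0 →
      (alpha < r → 1 < k) ∧ (alpha = r → k = 1) ∧ (r < alpha → k < 1) := by
    intro k hk hFk
    refine ⟨?_, ?_, ?_⟩
    · intro har
      by_contra h
      push_neg at h
      rcases h.eq_or_lt with h1 | h1
      · rw [← h1, hFk] at hF1; linarith
      · have := hpos k 1 hk hFk h1
        rw [hF1] at this; linarith
    · intro har
      rcases lt_trichotomy k 1 with h | h | h
      · have := hpos k 1 hk hFk h
        rw [hF1, har] at this; linarith
      · exact h
      · have := hneg k 1 hk hFk one_pos h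
        rw [hF1, har] at this; linarith
    · intro har
      by_contra h
      push_neg at h
      rcases h.eq_or_lt with h1 | h1
      · rw [h1, hFk] at hF1; linarith
      · have := hneg k 1 hk hFk one_pos h1
        rw [hF1] at this; linarith
  have hFfun : F = fun k => 1 / 2 * sigma ^ 2 * k * (k - 1) + (alpha + lam * mbar) * k -
      (r + lam) + lam * ∫ z, (1 - z) ^ k ∂m := funext hF
  refine ⟨?_, ?_, by linarith, ?_, ?_, ?_, ?_⟩
  · rw [← hFfun]; exact hFconv
  · rw [← hF 0]; exact hF0
  · rw [← hF 1]; exact hF1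
  · rw [← hFfun]; exact hFtop
  · simp only [← hF]; exact huniq
  · intro k hk hFk
    exact hcomp k hk (by rw [hF k]; exact hFk)
end

section
/- Assume λ > 0. For θ > 0 let k̂_θ denote the unique positive root of (1/2)σ²k(k−1) + (α + λm̄)k − θ = 0, i.e. k̂_θ = 1/2 − (α+λm̄)/σ² + √((1/2 − (α+λm̄)/σ²)² + 2θ/σ²). Then the unique positive root k₁ of F satisfies k̂_r < k₁ < k̂_{r+λ}. -/
open Set MeasureTheory

private lemma quad_lemB (sigma b θ x : ℝ) (hσ : 0 < sigma) (hθ : 0 < θ)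
    (h : 1 / 2 * sigma ^ 2 * x * (x - 1) + b * x - θ < 0) :
    x < 1 / 2 - b / sigma ^ 2 +
      Real.sqrt ((1 / 2 - b / sigma ^ 2) ^ 2 + 2 * θ / sigma ^ 2) := by
  set c := 1 / 2 - b / sigma ^ 2 with hc
  set s := Real.sqrt (c ^ 2 + 2 * θ / sigma ^ 2) with hs
  have hσ2 : (0 : ℝ) < sigma ^ 2 := by positivity
  have hs2 : s ^ 2 = c ^ 2 + 2 * θ / sigma ^ 2 :=
    Real.sq_sqrt (by positivity)
  have key : sigma ^ 2 * ((x - c) ^ 2 - (c ^ 2 + 2 * θ / sigma ^ 2)) =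
      2 * (1 / 2 * sigma ^ 2 * x * (x - 1) + b * x - θ) := by
    rw [hc]; field_simp; ring
  have hlt : (x - c) ^ 2 < s ^ 2 := by
    rw [hs2]; nlinarith
  have h2 : x - c < s := lt_of_pow_lt_pow_left₀ 2 (Real.sqrt_nonneg _) hlt
  linarith

private lemma quad_lemA (sigma b θ x : ℝ) (hσ : 0 < sigma) (hθ : 0 < θ)
    (hx : 0 < x)
    (h : 0 < 1 / 2 * sigma ^ 2 * x * (x - 1) + b * x - θ) :
    1 / 2 - b / sigma ^ 2 +
      Real.sqrt ((1 / 2 - b / sigma ^ 2) ^ 2 + 2 * θ / sigma ^ 2) < x := by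
  set c := 1 / 2 - b / sigma ^ 2 with hc
  set s := Real.sqrt (c ^ 2 + 2 * θ / sigma ^ 2) with hs
  have hσ2 : (0 : ℝ) < sigma ^ 2 := by positivity
  have hsnn : 0 ≤ s := Real.sqrt_nonneg _
  have hs2 : s ^ 2 = c ^ 2 + 2 * θ / sigma ^ 2 :=
    Real.sq_sqrt (by positivity)
  have key : sigma ^ 2 * ((x - c) ^ 2 - (c ^ 2 + 2 * θ / sigma ^ 2)) =
      2 * (1 / 2 * sigma ^ 2 * x * (x - 1) + b * x - θ) := by
    rw [hc]; field_simp; ring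
  have hgt : s ^ 2 < (x - c) ^ 2 := by
    rw [hs2]; nlinarith
  have hcs : c < s := by
    have h1 : c ^ 2 < s ^ 2 := by
      rw [hs2]
      have : 0 < 2 * θ / sigma ^ 2 := by positivity
      linarith
    nlinarith [abs_nonneg c, sq_abs c, le_abs_self c]
  have hxc : -(x - c) < s := by linarith
  have hfin : s < x - c := by nlinarith
  linarith

/-- Sandwich for the positive root of the geometric characteristic equation
(Lemma 3.2 of the paper, Section 7.2): if `λ > 0` and `k̂_θ` denotes the positive
root of `(1/2)σ²k(k−1) + (α+λm̄)k − θ = 0`, then `k̂_r < k₁ < k̂_{r+λ}`. -/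
theorem geometric_root_sandwich
    (sigma alpha lam r : ℝ)
    (hsigma : 0 < sigma) (hlam : 0 < lam) (hr : 0 < r)
    (m : Measure ℝ) [IsProbabilityMeasure m]
    (hm : m (Ioo 0 1)ᶜ = 0)
    (hint : Integrable (fun z => z) m)
    (mbar : ℝ) (hmbar : mbar = ∫ z, z ∂m)
    (k₁ : ℝ) (hk₁pos : 0 < k₁)
    (hk₁root : 1 / 2 * sigma ^ 2 * k₁ * (k₁ - 1) + (alpha + lam * mbar) * k₁ -
      (r + lam) + lam * ∫ z, (1 - z) ^ k₁ ∂m = 0) :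
    1 / 2 - (alpha + lam * mbar) / sigma ^ 2 +
        Real.sqrt ((1 / 2 - (alpha + lam * mbar) / sigma ^ 2) ^ 2 +
          2 * r / sigma ^ 2)
      < k₁ ∧
    k₁ < 1 / 2 - (alpha + lam * mbar) / sigma ^ 2 +
        Real.sqrt ((1 / 2 - (alpha + lam * mbar) / sigma ^ 2) ^ 2 +
          2 * (r + lam) / sigma ^ 2) := by
  have hae : ∀ᵐ z ∂m, z ∈ Ioo (0 : ℝ) 1 := by
    rw [ae_iff]
    exact hm
  set f : ℝ → ℝ := fun z => (1 - z) ^ k₁ with hf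
  have hmeas : Measurable f := by
    have hc : Continuous f :=
      (Real.continuous_rpow_const hk₁pos.le).comp (continuous_const.sub continuous_id)
    exact hc.measurable
  have hfpos : ∀ᵐ z ∂m, 0 < f z := by
    filter_upwards [hae] with z hz
    obtain ⟨hz1, hz2⟩ := hz
    exact Real.rpow_pos_of_pos (by linarith) _
  have hflt : ∀ᵐ z ∂m, f z < 1 := by
    filter_upwards [hae] with z hz
    obtain ⟨hz1, hz2⟩ := hz
    exact Real.rpow_lt_one (by linarith) (by linarith) hk₁pos
  have hint_f : Integrable f m := by
    apply (integrable_const (1 : ℝ)).mono' hmeas.aestronglyMeasurable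
    filter_upwards [hfpos, hflt] with z h1 h2
    rw [Real.norm_eq_abs, abs_of_pos h1]; linarith
  have hIoo : m (Ioo (0 : ℝ) 1) = 1 := by
    have h1 := measure_add_measure_compl (μ := m) (measurableSet_Ioo (a := (0:ℝ)) (b := 1))
    rw [hm, add_zero] at h1
    simpa using h1
  have hIpos : 0 < ∫ z, f z ∂m := by
    rw [integral_pos_iff_support_of_nonneg_ae
      (hfpos.mono fun z hz => hz.le) hint_f]
    have hsub : Ioo (0 : ℝ) 1 ⊆ Function.support f := by
      intro z hz
      exact (Real.rpow_pos_of_pos (by linarith [hz.2]) _).ne'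
    calc (0 : ENNReal) < 1 := by norm_num
      _ = m (Ioo 0 1) := hIoo.symm
      _ ≤ m (Function.support f) := measure_mono hsub
  have hIlt : (∫ z, f z ∂m) < 1 := by
    have hgint : Integrable (fun z => 1 - f z) m := (integrable_const (1 : ℝ)).sub hint_f
    have hgval : ∫ z, (1 - f z) ∂m = 1 - ∫ z, f z ∂m := by
      rw [integral_sub (integrable_const (1 : ℝ)) hint_f]
      simp
    have hgnn : ∀ᵐ z ∂m, 0 ≤ 1 - f z := by
      filter_upwards [hflt] with z hz
      linarith
    have hgpos : 0 < ∫ z, (1 - f z) ∂m := by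
      rw [integral_pos_iff_support_of_nonneg_ae hgnn hgint]
      have hsub : Ioo (0 : ℝ) 1 ⊆ Function.support (fun z => 1 - f z) := by
        intro z hz
        obtain ⟨hz1, hz2⟩ := hz
        have hlt1 : f z < 1 :=
          Real.rpow_lt_one (by linarith) (by linarith) hk₁pos
        simp only [Function.mem_support]
        intro hcontra
        have : f z = 1 := by linarith [sub_eq_zero.mp hcontra]
        linarith
      calc (0 : ENNReal) < 1 := by norm_num
        _ = m (Ioo 0 1) := hIoo.symm
        _ ≤ m (Function.support (fun z => 1 - f z)) := measure_mono hsub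
    linarith [hgval ▸ hgpos]
  set I : ℝ := ∫ z, f z ∂m with hI
  constructor
  · apply quad_lemA sigma (alpha + lam * mbar) r k₁ hsigma hr hk₁pos
    nlinarith [mul_pos hlam hIpos, mul_pos hlam (sub_pos.mpr hIlt)]
  · apply quad_lemB sigma (alpha + lam * mbar) (r + lam) k₁ hsigma (by linarith)
    nlinarith [mul_pos hlam hIpos]
end

section
/- Let k₁ = k₁(σ) denote the unique positive root of F as a function of the volatility σ > 0 (with α, λ, r, 𝔪 fixed). If α < r, then k₁ is strictly decreasing in σ: 0 < σ < σ̂ implies k₁(σ̂) < k₁(σ); if α > r, then k₁ is strictly increasing in σ: 0 < σ < σ̂ implies k₁(σ̂) > k₁(σ). -/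
open Set MeasureTheory

private lemma exp_comb_aux {t u v : ℝ} (ht0 : 0 ≤ t) (ht1 : t ≤ 1) :
    Real.exp (t * u + (1 - t) * v) ≤ t * Real.exp u + (1 - t) * Real.exp v := by
  have h := convexOn_exp.2 (Set.mem_univ u) (Set.mem_univ v)
    ht0 (show (0:ℝ) ≤ 1 - t by linarith) (show t + (1 - t) = 1 by ring)
  simpa [smul_eq_mul] using h

private lemma rpow_comb_aux {c t x y : ℝ} (hc0 : 0 < c) (ht0 : 0 ≤ t) (ht1 : t ≤ 1) :
    c ^ (t * x + (1 - t) * y) ≤ t * c ^ x + (1 - t) * c ^ y := by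
  rw [Real.rpow_def_of_pos hc0, Real.rpow_def_of_pos hc0, Real.rpow_def_of_pos hc0]
  rw [show Real.log c * (t * x + (1 - t) * y)
      = t * (Real.log c * x) + (1 - t) * (Real.log c * y) from by ring]
  exact exp_comb_aux ht0 ht1

/-- Geometric case of the paper's Theorem 5.1: the unique positive root `k₁(σ)` of
the geometric characteristic equation is strictly decreasing in the volatility `σ`
when `α < r` and strictly increasing in `σ` when `α > r`. -/
theorem geometric_root_monotone_in_volatility
    (alpha lam r : ℝ)
    (hlam : 0 ≤ lam) (hr : 0 < r)
    (m : Measure ℝ) [IsProbabilityMeasure m]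
    (hm : m (Ioo 0 1)ᶜ = 0)
    (hint : Integrable (fun z => z) m)
    (mbar : ℝ) (hmbar : mbar = ∫ z, z ∂m)
    (k₁ : ℝ → ℝ)
    (hk₁ : ∀ s : ℝ, 0 < s → 0 < k₁ s ∧
      1 / 2 * s ^ 2 * k₁ s * (k₁ s - 1) + (alpha + lam * mbar) * k₁ s -
        (r + lam) + lam * ∫ z, (1 - z) ^ (k₁ s) ∂m = 0) :
    (alpha < r → ∀ s shat : ℝ, 0 < s → s < shat → k₁ shat < k₁ s) ∧
    (r < alpha → ∀ s shat : ℝ, 0 < s → s < shat → k₁ s < k₁ shat) := by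
  have hae : ∀ᵐ z ∂m, z ∈ Ioo (0:ℝ) 1 := by
    rw [MeasureTheory.ae_iff]
    exact hm
  obtain ⟨I, hIdef⟩ : ∃ I : ℝ → ℝ, I = fun k => ∫ z, (1 - z) ^ k ∂m := ⟨_, rfl⟩
  have hmeas : ∀ k : ℝ, AEStronglyMeasurable (fun z : ℝ => (1 - z) ^ k) m := by
    intro k
    exact ((measurable_const.sub measurable_id).pow measurable_const).aestronglyMeasurable
  have hintk : ∀ k : ℝ, 0 ≤ k → Integrable (fun z : ℝ => (1 - z) ^ k) m := by
    intro k hk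
    refine Integrable.mono' (integrable_const (1:ℝ)) (hmeas k) ?_
    filter_upwards [hae] with z hz
    have h1 : (0:ℝ) < 1 - z := by linarith [hz.2]
    have h2 : (1:ℝ) - z ≤ 1 := by linarith [hz.1]
    rw [Real.norm_eq_abs, abs_of_nonneg (Real.rpow_nonneg h1.le _)]
    exact Real.rpow_le_one h1.le h2 hk
  have hI0 : I 0 = 1 := by
    rw [hIdef]
    simp [Real.rpow_zero]
  have hI1 : I 1 = 1 - mbar := by
    simp only [hIdef, Real.rpow_one]
    rw [integral_sub (integrable_const 1) hint]
    simp [hmbar]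
  have hIcomb : ∀ t x y : ℝ, 0 ≤ t → t ≤ 1 → 0 ≤ x → 0 ≤ y →
      I (t * x + (1 - t) * y) ≤ t * I x + (1 - t) * I y := by
    intro t x y ht0 ht1 hx hy
    simp only [hIdef]
    have hc : 0 ≤ t * x + (1 - t) * y := by
      have : 0 ≤ 1 - t := by linarith
      positivity
    have hle : ∀ᵐ z ∂m, (1 - z) ^ (t * x + (1 - t) * y)
        ≤ t * (1 - z) ^ x + (1 - t) * (1 - z) ^ y := by
      filter_upwards [hae] with z hz
      exact rpow_comb_aux (by linarith [hz.2]) ht0 ht1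
    have h2 : Integrable (fun z : ℝ => t * (1 - z) ^ x + (1 - t) * (1 - z) ^ y) m :=
      ((hintk x hx).const_mul t).add ((hintk y hy).const_mul (1 - t))
    refine le_trans (integral_mono_ae (hintk _ hc) h2 hle) ?_
    rw [integral_add ((hintk x hx).const_mul t) ((hintk y hy).const_mul (1 - t)),
      integral_const_mul, integral_const_mul]
  obtain ⟨g, hgdef⟩ : ∃ g : ℝ → ℝ → ℝ, g = fun s k =>
    1 / 2 * s ^ 2 * k * (k - 1) + (alpha + lam * mbar) * k - (r + lam) + lam * I k := ⟨_, rfl⟩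
  have hroot : ∀ s : ℝ, 0 < s → g s (k₁ s) = 0 := by
    intro s hs
    rw [hgdef]
    simp only [hIdef]
    exact (hk₁ s hs).2
  have hg0 : ∀ s : ℝ, g s 0 = -r := by
    intro s
    simp only [hgdef, hI0]
    ring
  have hg1 : ∀ s : ℝ, g s 1 = alpha - r := by
    intro s
    simp only [hgdef, hI1]
    ring
  have hgcomb : ∀ s t x y : ℝ, 0 ≤ t → t ≤ 1 → 0 ≤ x → 0 ≤ y →
      g s (t * x + (1 - t) * y) ≤ t * g s x + (1 - t) * g s y := by
    intro s t x y ht0 ht1 hx hy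
    have hIc := hIcomb t x y ht0 ht1 hx hy
    have hq : (t * x + (1 - t) * y) * ((t * x + (1 - t) * y) - 1)
        ≤ t * (x * (x - 1)) + (1 - t) * (y * (y - 1)) := by
      nlinarith [sq_nonneg (x - y), mul_nonneg ht0 (by linarith : (0:ℝ) ≤ 1 - t)]
    have hs2 : (0:ℝ) ≤ 1 / 2 * s ^ 2 := by positivity
    simp only [hgdef]
    nlinarith [mul_le_mul_of_nonneg_left hIc hlam, mul_le_mul_of_nonneg_left hq hs2]
  have hneg : ∀ s a : ℝ, 0 < s → 0 < a → a < k₁ s → g s a < 0 := by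
    intro s a hs ha hak
    have hk : 0 < k₁ s := (hk₁ s hs).1
    have ht0 : 0 ≤ a / k₁ s := div_nonneg ha.le hk.le
    have ht1 : a / k₁ s < 1 := (div_lt_one hk).2 hak
    have hcomb := hgcomb s (a / k₁ s) (k₁ s) 0 ht0 ht1.le hk.le le_rfl
    rw [show a / k₁ s * k₁ s + (1 - a / k₁ s) * 0 = a from by field_simp; ring] at hcomb
    rw [hroot s hs, hg0 s] at hcomb
    nlinarith [mul_pos (by linarith : (0:ℝ) < 1 - a / k₁ s) hr]
  have hpos : ∀ s a : ℝ, 0 < s → k₁ s < a → 0 < g s a := by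
    intro s a hs hka
    have hk : 0 < k₁ s := (hk₁ s hs).1
    have ha : 0 < a := hk.trans hka
    have ht0 : 0 < k₁ s / a := div_pos hk ha
    have ht1 : k₁ s / a < 1 := (div_lt_one ha).2 hka
    have hcomb := hgcomb s (k₁ s / a) a 0 ht0.le ht1.le ha.le le_rfl
    rw [show k₁ s / a * a + (1 - k₁ s / a) * 0 = k₁ s from by field_simp; ring] at hcomb
    rw [hroot s hs, hg0 s] at hcomb
    nlinarith [mul_pos (by linarith : (0:ℝ) < 1 - k₁ s / a) hr,
      mul_pos ht0 (by linarith : (0:ℝ) < 1 - k₁ s / a)]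
  have hdiff : ∀ s shat k : ℝ, g shat k - g s k = 1 / 2 * (shat ^ 2 - s ^ 2) * k * (k - 1) := by
    intro s shat k
    simp only [hgdef]
    ring
  constructor
  · intro har s shat hs hss
    have hshat : 0 < shat := hs.trans hss
    have hk : 0 < k₁ s := (hk₁ s hs).1
    have hk1 : 1 < k₁ s := by
      by_contra h
      push_neg at h
      rcases lt_or_eq_of_le h with h | h
      · have := hpos s 1 hs h
        rw [hg1 s] at this
        linarith
      · have h0 := hroot s hs
        rw [h, hg1 s] at h0
        linarith
    have hgp : 0 < g shat (k₁ s) := by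
      have h0 := hroot s hs
      have hd := hdiff s shat (k₁ s)
      have hs2 : s ^ 2 < shat ^ 2 := by nlinarith
      have hq : (0:ℝ) < 1 / 2 * (shat ^ 2 - s ^ 2) * k₁ s * (k₁ s - 1) := by
        have := mul_pos (mul_pos (mul_pos (by norm_num : (0:ℝ) < 1 / 2)
          (sub_pos.2 hs2)) hk) (by linarith : (0:ℝ) < k₁ s - 1)
        linarith [this]
      linarith
    by_contra h
    push_neg at h
    rcases lt_or_eq_of_le h with h | h
    · have := hneg shat (k₁ s) hshat hk h
      linarith
    · have h0 := hroot shat hshat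
      rw [← h] at h0
      linarith
  · intro har s shat hs hss
    have hshat : 0 < shat := hs.trans hss
    have hk : 0 < k₁ s := (hk₁ s hs).1
    have hk1 : k₁ s < 1 := by
      by_contra h
      push_neg at h
      rcases lt_or_eq_of_le h with h | h
      · have := hneg s 1 hs one_pos h
        rw [hg1 s] at this
        linarith
      · have h0 := hroot s hs
        rw [← h, hg1 s] at h0
        linarith
    have hgn : g shat (k₁ s) < 0 := by
      have h0 := hroot s hs
      have hd := hdiff s shat (k₁ s)
      have hs2 : s ^ 2 < shat ^ 2 := by nlinarith
      have hq : (0:ℝ) < 1 / 2 * (shat ^ 2 - s ^ 2) * k₁ s * (1 - k₁ s) := by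
        have := mul_pos (mul_pos (mul_pos (by norm_num : (0:ℝ) < 1 / 2)
          (sub_pos.2 hs2)) hk) (by linarith : (0:ℝ) < 1 - k₁ s)
        linarith [this]
      nlinarith
    by_contra h
    push_neg at h
    rcases lt_or_eq_of_le h with h | h
    · have := hpos shat (k₁ s) hshat h
      linarith
    · have h0 := hroot shat hshat
      rw [h] at h0
      linarith
end

section
/- Let k₁ = k₁(λ) denote the unique positive root of F_λ as a function of the jump intensity λ ≥ 0 (with σ, α, r, 𝔪 fixed). If α < r, then k₁ is strictly decreasing in λ: 0 ≤ λ < λ̂ implies k₁(λ̂) < k₁(λ); if α > r, then k₁ is strictly increasing in λ: 0 ≤ λ < λ̂ implies k₁(λ̂) > k₁(λ). -/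
open Set MeasureTheory

private lemma rpow_combo_le {u x y t s : ℝ} (hu : 0 < u) (ht : 0 ≤ t) (hs : 0 ≤ s)
    (hts : t + s = 1) : u ^ (t * x + s * y) ≤ t * u ^ x + s * u ^ y := by
  rw [Real.rpow_def_of_pos hu, Real.rpow_def_of_pos hu, Real.rpow_def_of_pos hu]
  have h := convexOn_exp.2 (mem_univ (Real.log u * x)) (mem_univ (Real.log u * y)) ht hs hts
  simp only [smul_eq_mul] at h
  have e : Real.log u * (t * x + s * y) = t * (Real.log u * x) + s * (Real.log u * y) := by ring
  rw [e]; exact h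

private lemma gz_pos {u k : ℝ} (hu0 : 0 < u) (hu1 : u < 1) (hk : 1 < k) :
    0 < (1 - u) * k - 1 + u ^ k := by
  have hk0 : (0:ℝ) < k := lt_trans one_pos hk
  have hc : Real.log u < 0 := Real.log_neg hu0 hu1
  have hne : (0:ℝ) ≠ Real.log u * k := (mul_neg_of_neg_of_pos hc hk0).ne'
  have ht : (0:ℝ) < 1 - 1 / k := by
    have : 1 / k < 1 := by rw [div_lt_one hk0]; exact hk
    linarith
  have hs : (0:ℝ) < 1 / k := by positivity
  have h := strictConvexOn_exp.2 (mem_univ (0:ℝ)) (mem_univ (Real.log u * k)) hne ht hs (by ring)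
  simp only [smul_eq_mul, Real.exp_zero] at h
  have e : (1 - 1 / k) * 0 + 1 / k * (Real.log u * k) = Real.log u := by field_simp; ring
  rw [e, Real.exp_log hu0] at h
  rw [show Real.exp (Real.log u * k) = u ^ k from (Real.rpow_def_of_pos hu0 k).symm] at h
  have h2 := mul_lt_mul_of_pos_left h hk0
  have e2 : k * ((1 - 1 / k) * 1 + 1 / k * u ^ k) = k - 1 + u ^ k := by field_simp
  rw [e2] at h2
  linarith

private lemma gz_neg {u k : ℝ} (hu0 : 0 < u) (hu1 : u < 1) (hk0 : 0 < k) (hk1 : k < 1) :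
    (1 - u) * k - 1 + u ^ k < 0 := by
  have hc : Real.log u < 0 := Real.log_neg hu0 hu1
  have hne : Real.log u ≠ (0:ℝ) := ne_of_lt hc
  have h := strictConvexOn_exp.2 (mem_univ (Real.log u)) (mem_univ (0:ℝ)) hne hk0
    (by linarith : (0:ℝ) < 1 - k) (by ring)
  simp only [smul_eq_mul, Real.exp_zero] at h
  have e : k * Real.log u + (1 - k) * 0 = Real.log u * k := by ring
  rw [e, Real.exp_log hu0] at h
  rw [show Real.exp (Real.log u * k) = u ^ k from (Real.rpow_def_of_pos hu0 k).symm] at h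
  linarith

private lemma integral_pos_of_ae_pos {m : Measure ℝ} [IsProbabilityMeasure m] {f : ℝ → ℝ}
    (hf : Integrable f m) (h : ∀ᵐ z ∂m, 0 < f z) : 0 < ∫ z, f z ∂m := by
  have hnn : 0 ≤ᵐ[m] f := h.mono fun z hz => hz.le
  rcases (integral_nonneg_of_ae hnn).lt_or_eq with h' | h'
  · exact h'
  · exfalso
    have hz0 : f =ᵐ[m] 0 := (integral_eq_zero_iff_of_nonneg_ae hnn hf).mp h'.symm
    have hfalse : ∀ᵐ z ∂m, False := by
      filter_upwards [h, hz0] with z h1 h2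
      rw [h2] at h1; exact lt_irrefl 0 h1
    haveI : (ae m).NeBot := ae_neBot.mpr (IsProbabilityMeasure.ne_zero m)
    exact hfalse.exists.elim fun z hz => hz

/-- Geometric case of the paper's Theorem 5.2: the unique positive root `k₁(λ)` of
the geometric characteristic equation is strictly decreasing in the jump
intensity `λ` when `α < r` and strictly increasing in `λ` when `α > r`. -/
theorem geometric_root_monotone_in_intensity
    (sigma alpha r : ℝ)
    (hsigma : 0 < sigma) (hr : 0 < r)
    (m : Measure ℝ) [IsProbabilityMeasure m]
    (hm : m (Ioo 0 1)ᶜ = 0)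
    (hint : Integrable (fun z => z) m)
    (mbar : ℝ) (hmbar : mbar = ∫ z, z ∂m)
    (k₁ : ℝ → ℝ)
    (hk₁ : ∀ l : ℝ, 0 ≤ l → 0 < k₁ l ∧
      1 / 2 * sigma ^ 2 * k₁ l * (k₁ l - 1) + (alpha + l * mbar) * k₁ l -
        (r + l) + l * ∫ z, (1 - z) ^ (k₁ l) ∂m = 0) :
    (alpha < r → ∀ l lhat : ℝ, 0 ≤ l → l < lhat → k₁ lhat < k₁ l) ∧
    (r < alpha → ∀ l lhat : ℝ, 0 ≤ l → l < lhat → k₁ l < k₁ lhat) := by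
  -- a.e. membership in (0,1)
  have hae : ∀ᵐ z ∂m, z ∈ Ioo (0:ℝ) 1 := by
    rw [ae_iff]
    simpa [Set.compl_def] using hm
  -- integrability of the power integrand
  have hMeas : ∀ k : ℝ, 0 ≤ k → AEStronglyMeasurable (fun z : ℝ => (1 - z) ^ k) m := by
    intro k hk
    exact (((Real.continuous_rpow_const hk).comp
      (continuous_const.sub continuous_id)).measurable).aestronglyMeasurable
  have hIntk : ∀ k : ℝ, 0 ≤ k → Integrable (fun z : ℝ => (1 - z) ^ k) m := by
    intro k hk
    refine Integrable.mono' (integrable_const 1) (hMeas k hk) ?_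
    filter_upwards [hae] with z hz
    rw [Real.norm_eq_abs, abs_of_nonneg (Real.rpow_nonneg (by linarith [hz.2]) k)]
    exact Real.rpow_le_one (by linarith [hz.2]) (by linarith [hz.1]) hk
  obtain ⟨F, hF⟩ : ∃ F : ℝ → ℝ → ℝ, F = fun l k =>
      1 / 2 * sigma ^ 2 * k * (k - 1) + (alpha + l * mbar) * k - (r + l)
        + l * ∫ z, (1 - z) ^ k ∂m := ⟨_, rfl⟩
  have hroot : ∀ l, 0 ≤ l → F l (k₁ l) = 0 := by
    intro l hl
    rw [hF]
    exact (hk₁ l hl).2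
  -- convexity of the integral term
  have hIconv : ∀ x y t s : ℝ, 0 ≤ x → 0 ≤ y → 0 ≤ t → 0 ≤ s → t + s = 1 →
      (∫ z, (1 - z) ^ (t * x + s * y) ∂m) ≤
        t * (∫ z, (1 - z) ^ x ∂m) + s * ∫ z, (1 - z) ^ y ∂m := by
    intro x y t s hx hy ht hs hts
    have h1 : t * (∫ z, (1 - z) ^ x ∂m) + s * (∫ z, (1 - z) ^ y ∂m)
        = ∫ z, (t * (1 - z) ^ x + s * (1 - z) ^ y) ∂m := by
      rw [integral_add ((hIntk x hx).const_mul t) ((hIntk y hy).const_mul s),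
        integral_const_mul, integral_const_mul]
    rw [h1]
    refine integral_mono_ae (hIntk _ (add_nonneg (mul_nonneg ht hx) (mul_nonneg hs hy)))
      (((hIntk x hx).const_mul t).add ((hIntk y hy).const_mul s)) ?_
    filter_upwards [hae] with z hz
    exact rpow_combo_le (by linarith [hz.2]) ht hs hts
  -- values at 0 and 1
  have hF0 : ∀ l : ℝ, F l 0 = -r := by
    intro l
    have h0 : (∫ z, (1 - z) ^ (0:ℝ) ∂m) = 1 := by simp
    simp only [hF]; rw [h0]; ring
  have hInt1 : (∫ z, (1 - z) ^ (1:ℝ) ∂m) = 1 - mbar := by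
    simp only [Real.rpow_one]
    rw [integral_sub (integrable_const 1) hint, integral_const]
    simp [hmbar]
  have hF1 : ∀ l : ℝ, F l 1 = alpha - r := by
    intro l
    simp only [hF]; rw [hInt1]; ring
  -- strict convexity combination inequality for F l
  have hkey : ∀ l x y t s : ℝ, 0 ≤ l → 0 ≤ x → 0 ≤ y → x ≠ y → 0 < t → 0 < s → t + s = 1 →
      F l (t * x + s * y) < t * F l x + s * F l y := by
    intro l x y t s hl hx hy hxy ht hs hts
    have hs1 : s = 1 - t := by linarith
    subst hs1
    have hIc := hIconv x y t (1 - t) hx hy ht.le hs.le (by ring)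
    have hIc' := mul_le_mul_of_nonneg_left hIc hl
    have h3 : 0 < sigma ^ 2 * (t * (1 - t) * (x - y) ^ 2) := by
      have hxy' : (0:ℝ) < (x - y) ^ 2 := by
        rcases (sub_ne_zero.mpr hxy).lt_or_gt with h' | h' <;> nlinarith
      exact mul_pos (pow_pos hsigma 2) (mul_pos (mul_pos ht hs) hxy')
    simp only [hF]
    nlinarith [hIc', h3]
  -- negative strictly before the positive root
  have fact2 : ∀ l a b : ℝ, 0 ≤ l → 0 < a → a < b → F l b = 0 → F l a < 0 := by
    intro l a b hl ha hab hb
    have hb0 : 0 < b := lt_trans ha hab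
    have ht : (0:ℝ) < 1 - a / b := by
      have : a / b < 1 := (div_lt_one hb0).mpr hab
      linarith
    have hs : (0:ℝ) < a / b := div_pos ha hb0
    have h := hkey l 0 b (1 - a / b) (a / b) hl le_rfl hb0.le (ne_of_lt hb0) ht hs (by ring)
    have combo : (1 - a / b) * 0 + a / b * b = a := by field_simp; ring
    rw [combo, hF0 l, hb, mul_zero, add_zero, mul_neg] at h
    linarith [mul_pos ht hr]
  -- positive strictly after the positive root
  have fact3 : ∀ l b c : ℝ, 0 ≤ l → 0 < b → b < c → F l b = 0 → 0 < F l c := by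
    intro l b c hl hb hbc h0
    have hc0 : 0 < c := lt_trans hb hbc
    have ht : (0:ℝ) < 1 - b / c := by
      have : b / c < 1 := (div_lt_one hc0).mpr hbc
      linarith
    have hs : (0:ℝ) < b / c := div_pos hb hc0
    have h := hkey l 0 c (1 - b / c) (b / c) hl le_rfl hc0.le (ne_of_lt hc0) ht hs (by ring)
    have combo : (1 - b / c) * 0 + b / c * c = b := by field_simp; ring
    rw [combo, hF0 l, h0, mul_neg] at h
    by_contra hFc
    push_neg at hFc
    have hle : b / c * F l c ≤ 0 := mul_nonpos_of_nonneg_of_nonpos hs.le hFc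
    linarith [mul_pos ht hr]
  -- the jump term and its sign
  have hG : ∀ l lhat k : ℝ, F lhat k - F l k
      = (lhat - l) * (mbar * k - 1 + ∫ z, (1 - z) ^ k ∂m) := by
    intro l lhat k; simp only [hF]; ring
  have hGeq : ∀ k : ℝ, 0 ≤ k → mbar * k - 1 + (∫ z, (1 - z) ^ k ∂m)
      = ∫ z, (z * k - 1 + (1 - z) ^ k) ∂m := by
    intro k hk
    have hi1 : Integrable (fun z : ℝ => z * k - 1) m := (hint.mul_const k).sub (integrable_const 1)
    have hi2 : Integrable (fun z : ℝ => z * k) m := hint.mul_const k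
    rw [integral_add hi1 (hIntk k hk), integral_sub hi2 (integrable_const 1),
      integral_mul_const, integral_const]
    simp only [probReal_univ, measure_univ, ENNReal.toReal_one, smul_eq_mul, mul_one, hmbar]
  have hGpos : ∀ k : ℝ, 1 < k → 0 < mbar * k - 1 + ∫ z, (1 - z) ^ k ∂m := by
    intro k hk
    rw [hGeq k (by linarith)]
    have hi3 : Integrable (fun z : ℝ => z * k - 1 + (1 - z) ^ k) m :=
      ((hint.mul_const k).sub (integrable_const 1)).add (hIntk k (by linarith))
    apply integral_pos_of_ae_pos hi3
    filter_upwards [hae] with z hz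
    have h := gz_pos (u := 1 - z) (by linarith [hz.2]) (by linarith [hz.1]) hk
    have e : (1 - (1 - z)) * k = z * k := by ring
    rw [e] at h
    exact h
  have hGneg : ∀ k : ℝ, 0 < k → k < 1 → mbar * k - 1 + (∫ z, (1 - z) ^ k ∂m) < 0 := by
    intro k hk0 hk1
    rw [hGeq k hk0.le]
    have hpos : 0 < ∫ z, -(z * k - 1 + (1 - z) ^ k) ∂m := by
      have hi4 : Integrable (fun z : ℝ => -(z * k - 1 + (1 - z) ^ k)) m :=
        (((hint.mul_const k).sub (integrable_const 1)).add (hIntk k hk0.le)).neg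
      apply integral_pos_of_ae_pos hi4
      filter_upwards [hae] with z hz
      have h := gz_neg (u := 1 - z) (by linarith [hz.2]) (by linarith [hz.1]) hk0 hk1
      have e : (1 - (1 - z)) * k = z * k := by ring
      rw [e] at h
      linarith
    rw [integral_neg] at hpos
    linarith
  -- roots compare to 1
  have hk_gt1 : alpha < r → ∀ l : ℝ, 0 ≤ l → 1 < k₁ l := by
    intro har l hl
    rcases lt_trichotomy (k₁ l) 1 with h | h | h
    · exfalso
      have h3 := fact3 l (k₁ l) 1 hl (hk₁ l hl).1 h (hroot l hl)
      rw [hF1 l] at h3; linarith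
    · exfalso
      have h0 := hroot l hl
      rw [h, hF1 l] at h0; linarith
    · exact h
  have hk_lt1 : r < alpha → ∀ l : ℝ, 0 ≤ l → k₁ l < 1 := by
    intro har l hl
    rcases lt_trichotomy (k₁ l) 1 with h | h | h
    · exact h
    · exfalso
      have h0 := hroot l hl
      rw [h, hF1 l] at h0; linarith
    · exfalso
      have h2 := fact2 l 1 (k₁ l) hl one_pos h (hroot l hl)
      rw [hF1 l] at h2; linarith
  constructor
  · -- α < r : decreasing
    intro har l lhat hl hll
    have hl' : 0 ≤ lhat := le_trans hl hll.le
    have h1 : 1 < k₁ l := hk_gt1 har l hl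
    have hpos : 0 < F lhat (k₁ l) := by
      have hd := hG l lhat (k₁ l)
      rw [hroot l hl] at hd
      have hGp := hGpos (k₁ l) h1
      nlinarith [mul_pos (sub_pos.mpr hll) hGp]
    rcases lt_trichotomy (k₁ lhat) (k₁ l) with h | h | h
    · exact h
    · exfalso
      have h0 := hroot lhat hl'
      rw [h] at h0; linarith
    · exfalso
      have h2 := fact2 lhat (k₁ l) (k₁ lhat) hl' (by linarith) h (hroot lhat hl')
      linarith
  · -- r < α : increasing
    intro har l lhat hl hll
    have hl' : 0 ≤ lhat := le_trans hl hll.le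
    have h1 : k₁ l < 1 := hk_lt1 har l hl
    have h0l : 0 < k₁ l := (hk₁ l hl).1
    have hneg : F lhat (k₁ l) < 0 := by
      have hd := hG l lhat (k₁ l)
      rw [hroot l hl] at hd
      have hGn := hGneg (k₁ l) h0l h1
      nlinarith [mul_pos (sub_pos.mpr hll) (neg_pos.mpr hGn)]
    rcases lt_trichotomy (k₁ l) (k₁ lhat) with h | h | h
    · exact h
    · exfalso
      have h0 := hroot lhat hl'
      rw [← h] at h0; linarith
    · exfalso
      have h3 := fact3 lhat (k₁ lhat) (k₁ l) hl' (hk₁ lhat hl').1 h (hroot lhat hl')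
      linarith
end
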